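/- arXiv:2501.04360 — 2 statements merged into one kernel-verified Lean document; each statement's English description precedes it below -/
import Mathlib

section
/- Let (x^(i), y_i), i = 1,…,n, be given with x^(i) ∈ [0,1]^d and y_i ∈ ℝ, and let 1 ≤ s ≤ d. Every minimizer f̂ of Σ_{i=1}^n (y_i − f(x^(i)))² over f ∈ F^{d,s}_TC is also a minimizer of Σ_{i=1}^n (y_i − f(x^(i)))² over the class of all f ∈ F^d_TCP satisfying the interaction restriction condition of order s. In particular, every minimizer over F^{d,d}_TC also minimizes the least squares criterion over the entire class F^d_TCP. -/
open MeasureTheory ProbabilityTheory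

noncomputable section

/-- The unit cube `[0,1]^ι` inside `ι → ℝ`. -/
def unitCube (ι : Type*) : Set (ι → ℝ) := Set.univ.pi fun _ => Set.Icc (0 : ℝ) 1

/-- The (tensor-product) divided difference of `f` of order `p` at the points `x`. -/
def mvDivDiff {ι : Type*} [Fintype ι] [DecidableEq ι] (f : (ι → ℝ) → ℝ) (p : ι → ℕ)
    (x : (k : ι) → Fin (p k + 1) → ℝ) : ℝ :=
  ∑ i : (k : ι) → Fin (p k + 1),
    f (fun k => x k (i k)) /
      ∏ k, ∏ j ∈ Finset.univ.erase (i k), (x k (i k) - x k j)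

/-- `F^d_TCP`: total concavity in the sense of Popoviciu, i.e. all divided differences
of order `p ∈ {0,1,2}^d` with `max_k p_k = 2` are nonpositive. -/
def MemTCP (d : ℕ) (f : (Fin d → ℝ) → ℝ) : Prop :=
  ∀ p : Fin d → ℕ, (∀ k, p k ≤ 2) → (∃ k, p k = 2) →
    ∀ x : (k : Fin d) → Fin (p k + 1) → ℝ,
      (∀ k, StrictMono (x k)) → (∀ k j, x k j ∈ Set.Icc (0 : ℝ) 1) →
      mvDivDiff f p x ≤ 0

/-- The collection of subsets `S ⊆ [d]` with `1 ≤ |S| ≤ s`. -/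
def smallSets (d s : ℕ) : Finset (Finset (Fin d)) :=
  Finset.univ.filter fun S => 1 ≤ S.card ∧ S.card ≤ s

/-- The set `[0,1)^{|S|} \ {0}`, viewed inside `Fin d → ℝ` (coordinates in `S`). -/
def tcSupport (d : ℕ) (S : Finset (Fin d)) : Set (Fin d → ℝ) :=
  {t | (∀ j ∈ S, t j ∈ Set.Ico (0 : ℝ) 1) ∧ ∃ j ∈ S, t j ≠ 0}

/-- A representation `(β₀, (β_S), (ν_S))` of a totally concave function:
a constant, coefficients for the multilinear terms, and finite Borel measures
`ν_S` on `[0,1)^{|S|} \ {0}`. -/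
structure TCRep (d : ℕ) where
  β0 : ℝ
  β : Finset (Fin d) → ℝ
  ν : Finset (Fin d) → Measure (Fin d → ℝ)
  finite : ∀ S, IsFiniteMeasure (ν S)
  support : ∀ S, ν S (tcSupport d S)ᶜ = 0

/-- The function represented by `r`, keeping interactions of order at most `s`. -/
def TCRep.toFun {d : ℕ} (s : ℕ) (r : TCRep d) (x : Fin d → ℝ) : ℝ :=
  r.β0 + ∑ S ∈ smallSets d s, r.β S * ∏ j ∈ S, x j
    - ∑ S ∈ smallSets d s, ∫ t, (∏ j ∈ S, max (x j - t j) 0) ∂(r.ν S)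

/-- The total size `V` of the measures in the representation `r`. -/
def TCRep.V {d : ℕ} (s : ℕ) (r : TCRep d) : ℝ :=
  ∑ S ∈ smallSets d s, (r.ν S Set.univ).toReal

/-- Membership in the class `F^{d,s}_TC` of totally concave functions on `[0,1]^d`
with interactions of order at most `s`. -/
def MemTC (d s : ℕ) (f : (Fin d → ℝ) → ℝ) : Prop :=
  ∃ r : TCRep d, ∀ x ∈ unitCube (Fin d), f x = r.toFun s x

/-- Membership in `F^{d,s}_TC` via a representation of total measure size at most `Vbd`. -/
def MemTCV (d s : ℕ) (Vbd : ℝ) (f : (Fin d → ℝ) → ℝ) : Prop :=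
  ∃ r : TCRep d, (∀ x ∈ unitCube (Fin d), f x = r.toFun s x) ∧ r.V s ≤ Vbd

/-- The interaction restriction condition of order `s`. -/
def InteractionRestriction (d s : ℕ) (f : (Fin d → ℝ) → ℝ) : Prop :=
  ∀ S : Finset (Fin d), s < S.card →
    ∀ x y : Fin d → ℝ, (∀ k ∈ S, 0 ≤ x k ∧ x k < y k ∧ y k ≤ 1) →
      ∑ R ∈ S.powerset, (-1 : ℝ) ^ (S.card - R.card) *
        f (fun k => if k ∈ R then y k else if k ∈ S then x k else 0) = 0

/-- The regularity condition at `0` for the subset `S`: the relevant divided differences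
near the origin are bounded above. -/
def RegZero (d : ℕ) (f : (Fin d → ℝ) → ℝ) (S : Finset (Fin d)) : Prop :=
  ∃ M : ℝ, ∀ t : Fin d → ℝ, (∀ k ∈ S, t k ∈ Set.Ioc (0 : ℝ) 1) →
    (∏ k ∈ S, t k)⁻¹ *
      ∑ R ∈ S.powerset, (-1 : ℝ) ^ (S.card - R.card) *
        f (fun k => if k ∈ R then t k else 0) ≤ M

/-- The regularity condition at `1` for the subset `S`: the relevant divided differences
near the far corner are bounded below. -/
def RegOne (d : ℕ) (f : (Fin d → ℝ) → ℝ) (S : Finset (Fin d)) : Prop :=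
  ∃ M : ℝ, ∀ t : Fin d → ℝ, (∀ k ∈ S, t k ∈ Set.Ico (0 : ℝ) 1) →
    M ≤ (∏ k ∈ S, (1 - t k))⁻¹ *
      ∑ R ∈ S.powerset, (-1 : ℝ) ^ (S.card - R.card) *
        f (fun k => if k ∈ R then 1 else if k ∈ S then t k else 0)

/-- Entire monotonicity: all divided differences of order `p ∈ {0,1}^ι \ {0}`
are nonnegative. -/
def EntirelyMonotone {ι : Type*} [Fintype ι] [DecidableEq ι] (g : (ι → ℝ) → ℝ) : Prop :=
  ∀ p : ι → ℕ, (∀ k, p k ≤ 1) → (∃ k, p k = 1) →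
    ∀ x : (k : ι) → Fin (p k + 1) → ℝ,
      (∀ k, StrictMono (x k)) → (∀ k j, x k j ∈ Set.Icc (0 : ℝ) 1) →
      0 ≤ mvDivDiff g p x

/-- Coordinate-wise right-continuity on the unit cube. -/
def CwRightCont {ι : Type*} [DecidableEq ι] (g : (ι → ℝ) → ℝ) : Prop :=
  ∀ x : ι → ℝ, (∀ k, x k ∈ Set.Icc (0 : ℝ) 1) → ∀ k : ι,
    ContinuousWithinAt (fun u => g (Function.update x k u)) (Set.Icc (x k) 1) (x k)

/-- Coordinate-wise left-continuity at points of the cube whose `k`-th coordinate is `1`,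
with respect to that coordinate. -/
def CwLeftContAtOne {ι : Type*} [DecidableEq ι] (g : (ι → ℝ) → ℝ) : Prop :=
  ∀ x : ι → ℝ, (∀ k, x k ∈ Set.Icc (0 : ℝ) 1) → ∀ k : ι, x k = 1 →
    ContinuousWithinAt (fun u => g (Function.update x k u)) (Set.Icc (0 : ℝ) 1) (x k)

/-- `t` belongs to the lattice `L_S` generated by the design points `x`
(extended by `0` in the coordinates outside `S`). -/
def InLattice {d n : ℕ} (x : Fin n → Fin d → ℝ) (S : Finset (Fin d)) (t : Fin d → ℝ) : Prop :=
  (∀ j ∈ S, t j = 0 ∨ ∃ i, t j = x i j) ∧ (∃ j ∈ S, t j ≠ 0) ∧ ∀ j ∉ S, t j = 0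

/-- The finite-dimensional class of functions built from hinge functions with knots in the
lattices `L_S` (nonnegative coefficients on the hinge terms). -/
def MemDiscrete (d s : ℕ) {n : ℕ} (x : Fin n → Fin d → ℝ) (f : (Fin d → ℝ) → ℝ) : Prop :=
  ∃ (β0 : ℝ) (β : Finset (Fin d) → ℝ)
    (T : Finset (Fin d) → Finset (Fin d → ℝ)) (c : Finset (Fin d) → (Fin d → ℝ) → ℝ),
    (∀ S ∈ smallSets d s, ∀ t ∈ T S, InLattice x S t) ∧
    (∀ S ∈ smallSets d s, ∀ t ∈ T S, 0 ≤ c S t) ∧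
    ∀ z ∈ unitCube (Fin d),
      f z = β0 + ∑ S ∈ smallSets d s, β S * ∏ j ∈ S, z j
        - ∑ S ∈ smallSets d s, ∑ t ∈ T S, c S t * ∏ j ∈ S, max (z j - t j) 0

/-- The point of the equally spaced lattice design indexed by `i`. -/
def latticePoint {d : ℕ} (nk : Fin d → ℕ) (i : ∀ k, Fin (nk k)) : Fin d → ℝ :=
  fun k => (i k : ℝ) / (nk k)

/-- `V_design(f)`: the infimum of `V(g)` over all totally concave `g` agreeing with `f`
at the design points. -/
def Vdesign (d : ℕ) {ι : Type*} (pts : ι → Fin d → ℝ) (f : (Fin d → ℝ) → ℝ) : ℝ :=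
  sInf {v : ℝ | ∃ r : TCRep d, (∀ i, r.toFun d (pts i) = f (pts i)) ∧ v = r.V d}

/-- `f` is a continuous rectangular piecewise multi-affine function (interaction order `≤ s`)
with respect to an axis-aligned grid partition of `[0,1]^d` into `m` rectangles. -/
def IsRectPartition (d s : ℕ) (f : (Fin d → ℝ) → ℝ) (m : ℕ) : Prop :=
  ContinuousOn f (unitCube (Fin d)) ∧
  ∃ (mk : Fin d → ℕ) (u : (k : Fin d) → Fin (mk k + 1) → ℝ),
    (∀ k, StrictMono (u k)) ∧ (∀ k, u k 0 = 0) ∧ (∀ k, u k (Fin.last (mk k)) = 1) ∧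
    m = ∏ k, mk k ∧
    ∀ j : (k : Fin d) → Fin (mk k),
      ∃ (c0 : ℝ) (c : Finset (Fin d) → ℝ),
        ∀ x : Fin d → ℝ,
          (∀ k, x k ∈ Set.Icc (u k (j k).castSucc) (u k (j k).succ)) →
          f x = c0 + ∑ S ∈ smallSets d s, c S * ∏ k ∈ S, x k

section Stage1
variable {d : ℕ}

/-- 1-D divided difference. -/
def dd1 (g : ℝ → ℝ) (p : ℕ) (xs : Fin (p+1) → ℝ) : ℝ :=
  ∑ i, g (xs i) / ∏ j ∈ Finset.univ.erase i, (xs i - xs j)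

lemma dd1_zero_eval (g : ℝ → ℝ) (xs : Fin 1 → ℝ) : dd1 g 0 xs = g (xs 0) := by
  simp [dd1, Finset.eq_empty_of_forall_notMem]

lemma dd1_one_eval (g : ℝ → ℝ) (xs : Fin 2 → ℝ) :
    dd1 g 1 xs = g (xs 0) / (xs 0 - xs 1) + g (xs 1) / (xs 1 - xs 0) := by
  have e0 : (Finset.univ.erase (0 : Fin 2)) = {1} := by decide
  have e1 : (Finset.univ.erase (1 : Fin 2)) = {0} := by decide
  rw [show dd1 g 1 xs = ∑ i : Fin 2, g (xs i) / ∏ j ∈ Finset.univ.erase i, (xs i - xs j) from rfl,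
    Fin.sum_univ_two, e0, e1]
  simp

lemma dd1_two_eval (g : ℝ → ℝ) (xs : Fin 3 → ℝ) :
    dd1 g 2 xs = g (xs 0) / ((xs 0 - xs 1) * (xs 0 - xs 2))
      + g (xs 1) / ((xs 1 - xs 0) * (xs 1 - xs 2))
      + g (xs 2) / ((xs 2 - xs 0) * (xs 2 - xs 1)) := by
  have e0 : (Finset.univ.erase (0 : Fin 3)) = {1, 2} := by decide
  have e1 : (Finset.univ.erase (1 : Fin 3)) = {0, 2} := by decide
  have e2 : (Finset.univ.erase (2 : Fin 3)) = {0, 1} := by decide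
  rw [show dd1 g 2 xs = ∑ i : Fin 3, g (xs i) / ∏ j ∈ Finset.univ.erase i, (xs i - xs j) from rfl,
    Fin.sum_univ_three, e0, e1, e2,
    Finset.prod_pair (by decide : (1:Fin 3) ≠ 2),
    Finset.prod_pair (by decide : (0:Fin 3) ≠ 2),
    Finset.prod_pair (by decide : (0:Fin 3) ≠ 1)]

lemma mvDivDiff_tensor (G : Fin d → ℝ → ℝ) (p : Fin d → ℕ)
    (x : (k : Fin d) → Fin (p k + 1) → ℝ) :
    mvDivDiff (fun z => ∏ k, G k (z k)) p x = ∏ k, dd1 (G k) (p k) (x k) := by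
  unfold mvDivDiff dd1
  rw [Finset.prod_univ_sum, Fintype.piFinset_univ]
  exact Finset.sum_congr rfl fun i _ => by rw [← Finset.prod_div_distrib]

lemma mvDivDiff_congr (f g : (Fin d → ℝ) → ℝ) (p : Fin d → ℕ)
    (x : (k : Fin d) → Fin (p k + 1) → ℝ)
    (h : ∀ i : (k : Fin d) → Fin (p k + 1), f (fun k => x k (i k)) = g (fun k => x k (i k))) :
    mvDivDiff f p x = mvDivDiff g p x := by
  unfold mvDivDiff
  exact Finset.sum_congr rfl fun i _ => by rw [h i]

lemma dd1_const (c : ℝ) (p : ℕ) (hp : 1 ≤ p) (hp2 : p ≤ 2) (xs : Fin (p+1) → ℝ)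
    (hm : StrictMono xs) : dd1 (fun _ => c) p xs = 0 := by
  interval_cases p
  · have h01 : xs 0 < xs 1 := hm (by decide)
    rw [dd1_one_eval]
    have n10 : xs 1 - xs 0 ≠ 0 := sub_ne_zero.mpr (ne_of_gt h01)
    have n01 : xs 0 - xs 1 ≠ 0 := sub_ne_zero.mpr (ne_of_lt h01)
    field_simp
    ring
  · have h01 : xs 0 < xs 1 := hm (by decide)
    have h12 : xs 1 < xs 2 := hm (by decide)
    have h02 : xs 0 < xs 2 := hm (by decide)
    rw [dd1_two_eval]
    have n01 : xs 0 - xs 1 ≠ 0 := by nlinarith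
    have n12 : xs 1 - xs 2 ≠ 0 := by nlinarith
    have n02 : xs 0 - xs 2 ≠ 0 := by nlinarith
    have n10 : xs 1 - xs 0 ≠ 0 := by nlinarith
    have n21 : xs 2 - xs 1 ≠ 0 := by nlinarith
    have n20 : xs 2 - xs 0 ≠ 0 := by nlinarith
    field_simp
    ring

lemma dd1_id2 (xs : Fin 3 → ℝ) (hm : StrictMono xs) :
    dd1 (fun z => z) 2 xs = 0 := by
  have h01 : xs 0 < xs 1 := hm (by decide)
  have h12 : xs 1 < xs 2 := hm (by decide)
  have h02 : xs 0 < xs 2 := hm (by decide)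
  rw [dd1_two_eval]
  have n01 : xs 0 - xs 1 ≠ 0 := by nlinarith
  have n12 : xs 1 - xs 2 ≠ 0 := by nlinarith
  have n02 : xs 0 - xs 2 ≠ 0 := by nlinarith
  have n10 : xs 1 - xs 0 ≠ 0 := by nlinarith
  have n21 : xs 2 - xs 1 ≠ 0 := by nlinarith
  have n20 : xs 2 - xs 0 ≠ 0 := by nlinarith
  field_simp
  ring

lemma convexOn_hinge (c : ℝ) : ConvexOn ℝ Set.univ (fun z : ℝ => max (z - c) 0) := by
  have h1 : ConvexOn ℝ (Set.univ : Set ℝ) (fun z : ℝ => z - c) :=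
    (convexOn_id convex_univ).sub (concaveOn_const c convex_univ)
  have h2 : ConvexOn ℝ (Set.univ : Set ℝ) (fun _ : ℝ => (0:ℝ)) := convexOn_const 0 convex_univ
  exact h1.sup h2

lemma dd1_hinge_nonneg (c : ℝ) (p : ℕ) (hp2 : p ≤ 2) (xs : Fin (p+1) → ℝ)
    (hm : StrictMono xs) : 0 ≤ dd1 (fun z => max (z - c) 0) p xs := by
  interval_cases p
  · rw [dd1_zero_eval]; positivity
  · have h01 : xs 0 < xs 1 := hm (by decide)
    rw [dd1_one_eval]
    have key : max (xs 0 - c) 0 / (xs 0 - xs 1) + max (xs 1 - c) 0 / (xs 1 - xs 0)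
        = (max (xs 1 - c) 0 - max (xs 0 - c) 0) / (xs 1 - xs 0) := by
      have n10 : xs 1 - xs 0 ≠ 0 := sub_ne_zero.mpr (ne_of_gt h01)
      have n01 : xs 0 - xs 1 ≠ 0 := sub_ne_zero.mpr (ne_of_lt h01)
      field_simp
      ring
    rw [key]
    apply div_nonneg _ (by linarith)
    simp only [sub_nonneg]
    exact max_le_max (by linarith) le_rfl
  · have h01 : xs 0 < xs 1 := hm (by decide)
    have h12 : xs 1 < xs 2 := hm (by decide)
    have h02 : xs 0 < xs 2 := hm (by decide)
    rw [dd1_two_eval]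
    set g : ℝ → ℝ := fun z => max (z - c) 0 with hg
    have key : g (xs 0) / ((xs 0 - xs 1) * (xs 0 - xs 2)) + g (xs 1) / ((xs 1 - xs 0) * (xs 1 - xs 2))
        + g (xs 2) / ((xs 2 - xs 0) * (xs 2 - xs 1))
        = ((g (xs 2) - g (xs 1)) / (xs 2 - xs 1) - (g (xs 1) - g (xs 0)) / (xs 1 - xs 0))
            / (xs 2 - xs 0) := by
      have n01 : xs 0 - xs 1 ≠ 0 := by nlinarith
      have n12 : xs 1 - xs 2 ≠ 0 := by nlinarith
      have n02 : xs 0 - xs 2 ≠ 0 := by nlinarith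
      have n10 : xs 1 - xs 0 ≠ 0 := by nlinarith
      have n21 : xs 2 - xs 1 ≠ 0 := by nlinarith
      have n20 : xs 2 - xs 0 ≠ 0 := by nlinarith
      field_simp
      ring
    rw [key]
    apply div_nonneg _ (by linarith)
    have := (convexOn_hinge c).slope_mono_adjacent (Set.mem_univ (xs 0)) (Set.mem_univ (xs 2)) h01 h12
    rw [sub_nonneg]
    exact this

lemma dd1_one_nonneg (p : ℕ) (hp2 : p ≤ 2) (xs : Fin (p+1) → ℝ)
    (hm : StrictMono xs) : 0 ≤ dd1 (fun _ => (1:ℝ)) p xs := by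
  rcases Nat.eq_zero_or_pos p with hp | hp
  · subst hp; rw [dd1_zero_eval]; norm_num
  · rw [dd1_const 1 p hp hp2 xs hm]

end Stage1
section Stage2
variable {d : ℕ}

lemma mvDivDiff_add (f g : (Fin d → ℝ) → ℝ) (p : Fin d → ℕ)
    (x : (k : Fin d) → Fin (p k + 1) → ℝ) :
    mvDivDiff (fun z => f z + g z) p x = mvDivDiff f p x + mvDivDiff g p x := by
  unfold mvDivDiff
  rw [← Finset.sum_add_distrib]
  exact Finset.sum_congr rfl fun i _ => add_div _ _ _

lemma mvDivDiff_sub (f g : (Fin d → ℝ) → ℝ) (p : Fin d → ℕ)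
    (x : (k : Fin d) → Fin (p k + 1) → ℝ) :
    mvDivDiff (fun z => f z - g z) p x = mvDivDiff f p x - mvDivDiff g p x := by
  unfold mvDivDiff
  rw [← Finset.sum_sub_distrib]
  exact Finset.sum_congr rfl fun i _ => sub_div _ _ _

lemma mvDivDiff_const_mul (c : ℝ) (f : (Fin d → ℝ) → ℝ) (p : Fin d → ℕ)
    (x : (k : Fin d) → Fin (p k + 1) → ℝ) :
    mvDivDiff (fun z => c * f z) p x = c * mvDivDiff f p x := by
  unfold mvDivDiff
  rw [Finset.mul_sum]
  exact Finset.sum_congr rfl fun i _ => mul_div_assoc _ _ _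

lemma mvDivDiff_finsum {γ : Type*} (A : Finset γ) (F : γ → (Fin d → ℝ) → ℝ) (p : Fin d → ℕ)
    (x : (k : Fin d) → Fin (p k + 1) → ℝ) :
    mvDivDiff (fun z => ∑ a ∈ A, F a z) p x = ∑ a ∈ A, mvDivDiff (F a) p x := by
  unfold mvDivDiff
  rw [Finset.sum_comm]
  exact Finset.sum_congr rfl fun i _ => Finset.sum_div _ _ _

/-- continuity of the hinge product integrand -/
lemma continuous_hingeProd (S : Finset (Fin d)) (z : Fin d → ℝ) :
    Continuous (fun t : Fin d → ℝ => ∏ j ∈ S, max (z j - t j) 0) := by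
  apply continuous_finset_prod
  intro j _
  exact (continuous_const.sub (continuous_apply j)).max continuous_const

lemma hingeProd_integrable (S : Finset (Fin d)) (z : Fin d → ℝ)
    (hz : z ∈ unitCube (Fin d)) (μ : Measure (Fin d → ℝ)) [IsFiniteMeasure μ]
    (hsupp : μ (tcSupport d S)ᶜ = 0) :
    MeasureTheory.Integrable (fun t : Fin d → ℝ => ∏ j ∈ S, max (z j - t j) 0) μ := by
  have hae : ∀ᵐ t ∂μ, t ∈ tcSupport d S := by
    rw [MeasureTheory.ae_iff]
    exact hsupp
  refine MeasureTheory.Integrable.mono' (MeasureTheory.integrable_const 1)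
    ((continuous_hingeProd S z).aestronglyMeasurable) ?_
  filter_upwards [hae] with t ht
  have h1 : ∀ j ∈ S, (0:ℝ) ≤ max (z j - t j) 0 := fun j _ => le_max_right _ _
  rw [Real.norm_of_nonneg (Finset.prod_nonneg h1)]
  apply Finset.prod_le_one h1
  intro j hj
  have htj := ht.1 j hj
  have hzj := hz j (Set.mem_univ j)
  simp only [Set.mem_Ico] at htj
  simp only [Set.mem_Icc] at hzj
  apply max_le (by linarith) (by norm_num)

lemma corner_mem_unitCube (S R : Finset (Fin d)) (hR : R ⊆ S) (xx yy : Fin d → ℝ)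
    (hxy : ∀ k ∈ S, 0 ≤ xx k ∧ xx k < yy k ∧ yy k ≤ 1) :
    (fun k => if k ∈ R then yy k else if k ∈ S then xx k else 0) ∈ unitCube (Fin d) := by
  intro k _
  by_cases hkR : k ∈ R
  · obtain ⟨h1, h2, h3⟩ := hxy k (hR hkR)
    simp [hkR, Set.mem_Icc]
    constructor <;> linarith
  · by_cases hkS : k ∈ S
    · obtain ⟨h1, h2, h3⟩ := hxy k hkS
      simp [hkR, hkS, Set.mem_Icc]
      constructor <;> linarith
    · simp [hkR, hkS, Set.mem_Icc]

/-- alternating sums over the powerset vanish if the function is insensitive to one coordinate -/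
lemma alt_sum_zero (S : Finset (Fin d)) (k₀ : Fin d) (hk₀ : k₀ ∈ S) (F : Finset (Fin d) → ℝ)
    (hF : ∀ R ∈ (S.erase k₀).powerset, F R = F (insert k₀ R)) :
    ∑ R ∈ S.powerset, (-1 : ℝ) ^ (S.card - R.card) * F R = 0 := by
  have hpow : S.powerset = (insert k₀ (S.erase k₀)).powerset := by
    rw [Finset.insert_erase hk₀]
  rw [hpow, Finset.sum_powerset_insert (Finset.notMem_erase k₀ S)]
  rw [← Finset.sum_add_distrib]
  apply Finset.sum_eq_zero
  intro R hR
  have hRsub : R ⊆ S.erase k₀ := Finset.mem_powerset.mp hR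
  have hk₀R : k₀ ∉ R := fun h => Finset.notMem_erase k₀ S (hRsub h)
  have hcard : (insert k₀ R).card = R.card + 1 := Finset.card_insert_of_notMem hk₀R
  have hRcard : R.card < S.card := by
    have h1 : R.card ≤ (S.erase k₀).card := Finset.card_le_card hRsub
    have h2 : (S.erase k₀).card < S.card := Finset.card_erase_lt_of_mem hk₀
    omega
  rw [← hF R hR, hcard]
  have hpow2 : (S.card - (R.card + 1)) + 1 = S.card - R.card := by omega
  rw [← hpow2, pow_succ]
  ring

lemma dd1_of_eq_two {g : ℝ → ℝ} {p : ℕ} (hp : p = 2) (xs : Fin (p+1) → ℝ) (hm : StrictMono xs)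
    (H : ∀ ys : Fin 3 → ℝ, StrictMono ys → dd1 g 2 ys = 0) : dd1 g p xs = 0 := by
  subst hp; exact H xs hm

lemma mvDivDiff_integral (F : (Fin d → ℝ) → (Fin d → ℝ) → ℝ) (p : Fin d → ℕ)
    (x : (k : Fin d) → Fin (p k + 1) → ℝ) (μ : Measure (Fin d → ℝ))
    (hInt : ∀ i : (k : Fin d) → Fin (p k + 1),
      MeasureTheory.Integrable (fun t => F t (fun k => x k (i k))) μ) :
    mvDivDiff (fun z => ∫ t, F t z ∂μ) p x = ∫ t, mvDivDiff (F t) p x ∂μ := by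
  unfold mvDivDiff
  have h1 : ∀ i : (k : Fin d) → Fin (p k + 1),
      (∫ t, F t (fun k => x k (i k)) ∂μ) /
          (∏ k, ∏ j ∈ Finset.univ.erase (i k), (x k (i k) - x k j))
        = ∫ t, F t (fun k => x k (i k)) /
            (∏ k, ∏ j ∈ Finset.univ.erase (i k), (x k (i k) - x k j)) ∂μ :=
    fun i => (MeasureTheory.integral_div _ _).symm
  rw [Finset.sum_congr rfl fun i _ => h1 i]
  rw [← MeasureTheory.integral_finset_sum _ (fun i _ => (hInt i).div_const _)]

lemma memTC_memTCP (s : ℕ) (f : (Fin d → ℝ) → ℝ) (hf : MemTC d s f) : MemTCP d f := by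
  obtain ⟨r, hr⟩ := hf
  intro p hp2 hpex x hmono hicc
  have hcube : ∀ i : (k : Fin d) → Fin (p k + 1), (fun k => x k (i k)) ∈ unitCube (Fin d) :=
    fun i k _ => hicc k (i k)
  rw [mvDivDiff_congr f (r.toFun s) p x (fun i => hr _ (hcube i))]
  unfold TCRep.toFun
  rw [mvDivDiff_sub, mvDivDiff_add, mvDivDiff_finsum, mvDivDiff_finsum]
  obtain ⟨k₀, hk₀⟩ := hpex
  -- constant term
  have hconst : ∀ c : ℝ, mvDivDiff (fun _ : Fin d → ℝ => c) p x = 0 := by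
    intro c
    have : (fun _ : Fin d → ℝ => c)
        = (fun z : Fin d → ℝ => c * ∏ k : Fin d, (fun _ : ℝ => (1:ℝ)) (z k)) := by
      funext z; simp
    rw [this, mvDivDiff_const_mul, mvDivDiff_tensor (fun _ => fun _ : ℝ => (1:ℝ)) p x]
    rw [Finset.prod_eq_zero (Finset.mem_univ k₀)]
    · ring
    · exact dd1_const 1 (p k₀) (by omega) (hp2 k₀) (x k₀) (hmono k₀)
  have hmulti : ∀ S : Finset (Fin d),
      mvDivDiff (fun z => ∏ j ∈ S, z j) p x = 0 := by
    intro S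
    have hrw : (fun z : Fin d → ℝ => ∏ j ∈ S, z j)
        = (fun z : Fin d → ℝ => ∏ k, (fun w : ℝ => if k ∈ S then w else 1) (z k)) := by
      funext z
      rw [Finset.prod_ite_mem, Finset.univ_inter]
    rw [hrw, mvDivDiff_tensor (fun k => fun w : ℝ => if k ∈ S then w else 1) p x,
      Finset.prod_eq_zero (Finset.mem_univ k₀)]
    by_cases hk : k₀ ∈ S
    · simp only [hk, if_true]
      exact dd1_of_eq_two hk₀ (x k₀) (hmono k₀) dd1_id2
    · simp only [hk, if_false]
      exact dd1_const 1 (p k₀) (by omega) (hp2 k₀) (x k₀) (hmono k₀)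
  -- integral terms
  have hint : ∀ S ∈ smallSets d s,
      0 ≤ mvDivDiff (fun z => ∫ t, (∏ j ∈ S, max (z j - t j) 0) ∂(r.ν S)) p x := by
    intro S _
    have : IsFiniteMeasure (r.ν S) := r.finite S
    have hfun : ∀ z : Fin d → ℝ, ∀ t : Fin d → ℝ,
        (∏ j ∈ S, max (z j - t j) 0)
          = ∏ k : Fin d, (fun w : ℝ => if k ∈ S then max (w - t k) 0 else 1) (z k) := by
      intro z t
      rw [Finset.prod_ite_mem, Finset.univ_inter]
    have hfrw : (fun z : Fin d → ℝ => ∫ t, (∏ j ∈ S, max (z j - t j) 0) ∂(r.ν S))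
        = (fun z => ∫ t, (∏ k : Fin d,
            (fun w : ℝ => if k ∈ S then max (w - t k) 0 else 1) (z k)) ∂(r.ν S)) := by
      funext z
      congr 1
      funext t
      exact hfun z t
    rw [hfrw]
    have hInt : ∀ i : (k : Fin d) → Fin (p k + 1),
        MeasureTheory.Integrable
          (fun t : Fin d → ℝ => ∏ k : Fin d,
            (fun w : ℝ => if k ∈ S then max (w - t k) 0 else 1) ((fun k' => x k' (i k')) k))
          (r.ν S) := by
      intro i
      have := hingeProd_integrable S (fun k' => x k' (i k')) (hcube i) (r.ν S) (r.support S)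
      refine this.congr ?_
      filter_upwards with t
      exact hfun _ t
    rw [mvDivDiff_integral (fun t z => ∏ k : Fin d,
      (fun w : ℝ => if k ∈ S then max (w - t k) 0 else 1) (z k)) p x (r.ν S) hInt]
    apply MeasureTheory.integral_nonneg
    intro t
    have htens := mvDivDiff_tensor (fun k => fun w : ℝ => if k ∈ S then max (w - t k) 0 else 1) p x
    simp only [Pi.zero_apply]
    rw [htens]
    apply Finset.prod_nonneg
    intro k _
    by_cases hk : k ∈ S
    · simp only [hk, if_true]
      exact dd1_hinge_nonneg (t k) (p k) (hp2 k) (x k) (hmono k)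
    · simp only [hk, if_false]
      exact dd1_one_nonneg (p k) (hp2 k) (x k) (hmono k)
  rw [hconst]
  have h2 : ∑ S ∈ smallSets d s, mvDivDiff (fun z => r.β S * ∏ j ∈ S, z j) p x = 0 := by
    apply Finset.sum_eq_zero
    intro S _
    rw [mvDivDiff_const_mul, hmulti S, mul_zero]
  rw [h2]
  have h3 : 0 ≤ ∑ S ∈ smallSets d s,
      mvDivDiff (fun z => ∫ t, (∏ j ∈ S, max (z j - t j) 0) ∂(r.ν S)) p x :=
    Finset.sum_nonneg hint
  linarith

end Stage2
section Stage3
variable {d : ℕ}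

lemma memTC_IR (s : ℕ) (f : (Fin d → ℝ) → ℝ) (hf : MemTC d s f) :
    InteractionRestriction d s f := by
  obtain ⟨r, hr⟩ := hf
  intro S hcard xx yy hxy
  -- replace f by toFun at corners
  have hcorner : ∀ R ∈ S.powerset,
      f (fun k => if k ∈ R then yy k else if k ∈ S then xx k else 0)
        = r.toFun s (fun k => if k ∈ R then yy k else if k ∈ S then xx k else 0) := by
    intro R hR
    exact hr _ (corner_mem_unitCube S R (Finset.mem_powerset.mp hR) xx yy hxy)
  rw [Finset.sum_congr rfl fun R hR => by rw [hcorner R hR]]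
  -- expand toFun
  unfold TCRep.toFun
  have expand : ∀ R ∈ S.powerset,
      (-1 : ℝ) ^ (S.card - R.card) *
        (r.β0 + ∑ S' ∈ smallSets d s, r.β S' *
            ∏ j ∈ S', (fun k => if k ∈ R then yy k else if k ∈ S then xx k else 0) j
          - ∑ S' ∈ smallSets d s, ∫ t, (∏ j ∈ S',
              max ((fun k => if k ∈ R then yy k else if k ∈ S then xx k else 0) j - t j) 0)
              ∂(r.ν S'))
      = (-1 : ℝ) ^ (S.card - R.card) * r.β0
        + ∑ S' ∈ smallSets d s, (-1 : ℝ) ^ (S.card - R.card) * (r.β S' *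
            ∏ j ∈ S', (fun k => if k ∈ R then yy k else if k ∈ S then xx k else 0) j)
        - ∑ S' ∈ smallSets d s, (-1 : ℝ) ^ (S.card - R.card) * ∫ t, (∏ j ∈ S',
              max ((fun k => if k ∈ R then yy k else if k ∈ S then xx k else 0) j - t j) 0)
              ∂(r.ν S') := by
    intro R _
    rw [mul_sub, mul_add, Finset.mul_sum, Finset.mul_sum]
  rw [Finset.sum_congr rfl expand, Finset.sum_sub_distrib, Finset.sum_add_distrib,
    Finset.sum_comm (s := S.powerset), Finset.sum_comm (s := S.powerset)]
  -- the pairing coordinate: for each S' ∈ smallSets, pick k₀ ∈ S \ S'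
  have hpick : ∀ S' ∈ smallSets d s, ∃ k₀ ∈ S, k₀ ∉ S' := by
    intro S' hS'
    by_contra hcon
    push_neg at hcon
    have hsub : S ⊆ S' := fun k hk => hcon k hk
    have := Finset.card_le_card hsub
    have hS'c : S'.card ≤ s := by
      simp only [smallSets, Finset.mem_filter] at hS'
      exact hS'.2.2
    omega
  have hSne : ∃ k₁, k₁ ∈ S := by
    have : 0 < S.card := by omega
    exact Finset.card_pos.mp this
  obtain ⟨k₁, hk₁⟩ := hSne
  have hz1 : ∑ R ∈ S.powerset, (-1 : ℝ) ^ (S.card - R.card) * r.β0 = 0 := by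
    apply alt_sum_zero S k₁ hk₁
    intro R _
    rfl
  have hz2 : ∀ S' ∈ smallSets d s,
      ∑ R ∈ S.powerset, (-1 : ℝ) ^ (S.card - R.card) * (r.β S' *
          ∏ j ∈ S', (fun k => if k ∈ R then yy k else if k ∈ S then xx k else 0) j) = 0 := by
    intro S' hS'
    obtain ⟨k₀, hk₀S, hk₀S'⟩ := hpick S' hS'
    apply alt_sum_zero S k₀ hk₀S
    intro R hR
    congr 1
    apply Finset.prod_congr rfl
    intro j hj
    have hjk₀ : j ≠ k₀ := fun h => hk₀S' (h ▸ hj)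
    simp [Finset.mem_insert, hjk₀]
  have hz3 : ∀ S' ∈ smallSets d s,
      ∑ R ∈ S.powerset, (-1 : ℝ) ^ (S.card - R.card) * ∫ t, (∏ j ∈ S',
          max ((fun k => if k ∈ R then yy k else if k ∈ S then xx k else 0) j - t j) 0)
          ∂(r.ν S') = 0 := by
    intro S' hS'
    obtain ⟨k₀, hk₀S, hk₀S'⟩ := hpick S' hS'
    apply alt_sum_zero S k₀ hk₀S
    intro R hR
    congr 1
    funext t
    apply Finset.prod_congr rfl
    intro j hj
    have hjk₀ : j ≠ k₀ := fun h => hk₀S' (h ▸ hj)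
    simp [Finset.mem_insert, hjk₀]
  rw [hz1, Finset.sum_eq_zero hz2, Finset.sum_eq_zero hz3]
  ring

end Stage3
section Stage4

/-- slope-difference weights -/
noncomputable def dwt (t : ℕ → ℝ) (e i : ℕ) : ℝ :=
  ((if i = e then 1 else 0) - (if i = e - 1 then 1 else 0)) / (t e - t (e - 1))

/-- the full coefficient weights -/
noncomputable def Wt (t : ℕ → ℝ) (e i : ℕ) : ℝ :=
  if e = 0 then (if i = 0 then 1 else 0)
  else dwt t e i - (if 2 ≤ e then dwt t (e-1) i else 0)

/-- 1-D basis functions: constant and hinges -/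
noncomputable def phit (t : ℕ → ℝ) (e : ℕ) (z : ℝ) : ℝ :=
  if e = 0 then 1 else max (z - t (e - 1)) 0

/-- 1-D slopes -/
noncomputable def Dsl (t : ℕ → ℝ) (h : ℝ → ℝ) (e : ℕ) : ℝ :=
  if e = 0 then 0 else (h (t e) - h (t (e-1))) / (t e - t (e-1))

lemma dwt_eval (t : ℕ → ℝ) (h : ℝ → ℝ) (m e : ℕ) (he : 1 ≤ e) (hem : e ≤ m) :
    ∑ i ∈ Finset.range (m+1), dwt t e i * h (t i)
      = (h (t e) - h (t (e-1))) / (t e - t (e-1)) := by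
  have hsplit : ∀ i, dwt t e i * h (t i)
      = (if i = e then h (t i) / (t e - t (e-1)) else 0)
        + (if i = e - 1 then -(h (t i) / (t e - t (e-1))) else 0) := by
    intro i
    unfold dwt
    have h3 : ¬ (e = e - 1) := by omega
    have h4 : ¬ (e - 1 = e) := by omega
    by_cases h1 : i = e
    · have h2 : ¬ (i = e - 1) := by omega
      simp [h1, h2, h3]
      ring
    · by_cases h2 : i = e - 1
      · simp [h1, h2, h4]
        ring
      · simp [h1, h2]
  rw [Finset.sum_congr rfl fun i _ => hsplit i, Finset.sum_add_distrib,
    Finset.sum_ite_eq' (Finset.range (m+1)) e, Finset.sum_ite_eq' (Finset.range (m+1)) (e-1)]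
  have h1 : e ∈ Finset.range (m+1) := by simp; omega
  have h2 : e - 1 ∈ Finset.range (m+1) := by simp; omega
  rw [if_pos h1, if_pos h2]
  ring

lemma Wt_eval (t : ℕ → ℝ) (h : ℝ → ℝ) (m e : ℕ) (he : 1 ≤ e) (hem : e ≤ m) :
    ∑ i ∈ Finset.range (m+1), Wt t e i * h (t i) = Dsl t h e - Dsl t h (e-1) := by
  have hne : ¬ (e = 0) := by omega
  by_cases h2 : 2 ≤ e
  · have he1 : 1 ≤ e - 1 := by omega
    have hne1 : ¬ (e - 1 = 0) := by omega
    simp only [Wt, if_neg hne, if_pos h2, sub_mul, Finset.sum_sub_distrib]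
    rw [dwt_eval t h m e he hem, dwt_eval t h m (e-1) he1 (by omega)]
    simp [Dsl, hne, hne1]
  · have he1 : e = 1 := by omega
    subst he1
    simp only [Wt, if_neg hne, if_neg h2, sub_zero]
    rw [dwt_eval t h m 1 le_rfl hem]
    simp [Dsl]

lemma Wt_zero_eval (t : ℕ → ℝ) (h : ℝ → ℝ) (m : ℕ) :
    ∑ i ∈ Finset.range (m+1), Wt t 0 i * h (t i) = h (t 0) := by
  have hterm : ∀ i ∈ Finset.range (m+1), Wt t 0 i * h (t i) = (if i = 0 then h (t i) else 0) := by
    intro i _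
    by_cases h1 : i = 0 <;> simp [Wt, h1]
  rw [Finset.sum_congr rfl hterm, Finset.sum_ite_eq' (Finset.range (m+1)) 0]
  simp

/-- Abel-summation style algebraic identity -/
lemma abel_identity (D tt : ℕ → ℝ) (hD0 : D 0 = 0) (X : ℝ) (l : ℕ) :
    ∑ e ∈ Finset.range l, (D (e+1) - D e) * (X - tt e)
      = D l * (X - tt l) + ∑ e ∈ Finset.range l, D (e+1) * (tt (e+1) - tt e) := by
  induction l with
  | zero => simp [hD0]
  | succ n ih =>
    rw [Finset.sum_range_succ, ih, Finset.sum_range_succ (f := fun e => D (e+1) * (tt (e+1) - tt e))]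
    ring

/-- 1-D reproduction of grid values -/
lemma oneD_repro (t : ℕ → ℝ) (m : ℕ) (hmono : ∀ a b : ℕ, a < b → b ≤ m → t a < t b)
    (h : ℝ → ℝ) (l : ℕ) (hl : l ≤ m) :
    ∑ e ∈ Finset.range (m+1), (∑ i ∈ Finset.range (m+1), Wt t e i * h (t i)) * phit t e (t l)
      = h (t l) := by
  rw [Finset.sum_range_succ']
  have hzero : (∑ i ∈ Finset.range (m+1), Wt t 0 i * h (t i)) * phit t 0 (t l) = h (t 0) := by
    rw [Wt_zero_eval]
    simp [phit]
  rw [hzero]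
  have hterm : ∀ e ∈ Finset.range m,
      (∑ i ∈ Finset.range (m+1), Wt t (e+1) i * h (t i)) * phit t (e+1) (t l)
        = (Dsl t h (e+1) - Dsl t h e) * max (t l - t e) 0 := by
    intro e he
    simp only [Finset.mem_range] at he
    rw [Wt_eval t h m (e+1) (by omega) (by omega)]
    simp [phit]
  rw [Finset.sum_congr rfl hterm]
  -- restrict to range l
  have hsub : Finset.range l ⊆ Finset.range m := by
    intro a ha; simp only [Finset.mem_range] at *; omega
  rw [← Finset.sum_subset hsub (fun e he hne => by
    simp only [Finset.mem_range] at he hne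
    have hle : l ≤ e := by omega
    have : t l ≤ t e := by
      rcases Nat.eq_or_lt_of_le hle with h1 | h1
      · rw [h1]
      · exact le_of_lt (hmono l e h1 (by omega))
    rw [max_eq_right (by linarith), mul_zero])]
  have hval : ∀ e ∈ Finset.range l,
      (Dsl t h (e+1) - Dsl t h e) * max (t l - t e) 0
        = (Dsl t h (e+1) - Dsl t h e) * (t l - t e) := by
    intro e he
    simp only [Finset.mem_range] at he
    have : t e < t l := hmono e l he hl
    rw [max_eq_left (by linarith)]
  rw [Finset.sum_congr rfl hval, abel_identity (Dsl t h) t (by simp [Dsl]) (t l) l]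
  have htel : ∀ e ∈ Finset.range l, Dsl t h (e+1) * (t (e+1) - t e) = h (t (e+1)) - h (t e) := by
    intro e he
    simp only [Finset.mem_range] at he
    have hlt : t e < t (e+1) := hmono e (e+1) (by omega) (by omega)
    simp only [Dsl, Nat.add_sub_cancel, if_neg (Nat.succ_ne_zero e)]
    exact div_mul_cancel₀ _ (sub_ne_zero.mpr (ne_of_gt hlt))
  rw [Finset.sum_congr rfl htel, Finset.sum_range_sub (fun e => h (t e)) l]
  ring

/-- 1-D dual basis property -/
lemma oneD_dual (t : ℕ → ℝ) (m : ℕ) (hmono : ∀ a b : ℕ, a < b → b ≤ m → t a < t b)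
    (i l : ℕ) (hi : i ≤ m) (hl : l ≤ m) :
    ∑ e ∈ Finset.range (m+1), Wt t e i * phit t e (t l) = if i = l then 1 else 0 := by
  have hinj : ∀ a b : ℕ, a ≤ m → b ≤ m → t a = t b → a = b := by
    intro a b ha hb hab
    by_contra hne
    rcases Nat.lt_or_ge a b with h1 | h1
    · exact absurd hab (ne_of_lt (hmono a b h1 hb))
    · have h2 : b < a := by omega
      exact absurd hab.symm (ne_of_lt (hmono b a h2 ha))
  have key := oneD_repro t m hmono (fun z => if z = t i then 1 else 0) l hl
  have hroweval : ∀ e ∈ Finset.range (m+1),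
      (∑ i' ∈ Finset.range (m+1), Wt t e i' * (if t i' = t i then (1:ℝ) else 0)) * phit t e (t l)
        = Wt t e i * phit t e (t l) := by
    intro e _
    congr 1
    have hstep : ∀ i' ∈ Finset.range (m+1),
        Wt t e i' * (if t i' = t i then (1:ℝ) else 0) = (if i' = i then Wt t e i' else 0) := by
      intro i' hi'
      simp only [Finset.mem_range] at hi'
      by_cases h1 : i' = i
      · simp [h1]
      · rw [if_neg (fun hc => h1 (hinj i' i (by omega) hi hc)), if_neg h1, mul_zero]
    rw [Finset.sum_congr rfl hstep, Finset.sum_ite_eq' (Finset.range (m+1)) i,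
      if_pos (by simp; omega)]
  rw [Finset.sum_congr rfl hroweval] at key
  rw [key]
  by_cases h1 : i = l
  · simp [h1]
  · rw [if_neg (fun hc => h1 (hinj l i hl hi hc).symm), if_neg h1]

end Stage4
section Stage5
variable {d : ℕ}

/-- multivariate tensor coefficients of the interpolant -/
noncomputable def gridC (g : (Fin d → ℝ) → ℝ) (t : Fin d → ℕ → ℝ) (m : Fin d → ℕ)
    (e : Fin d → ℕ) : ℝ :=
  ∑ j ∈ Fintype.piFinset (fun k => Finset.range (m k + 1)),
    (∏ k, Wt (t k) (e k) (j k)) * g (fun k => t k (j k))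

lemma mv_repro (g : (Fin d → ℝ) → ℝ) (t : Fin d → ℕ → ℝ) (m : Fin d → ℕ)
    (hmono : ∀ k, ∀ a b : ℕ, a < b → b ≤ m k → t k a < t k b)
    (l : Fin d → ℕ) (hl : ∀ k, l k ≤ m k) :
    ∑ e ∈ Fintype.piFinset (fun k => Finset.range (m k + 1)),
      gridC g t m e * ∏ k, phit (t k) (e k) (t k (l k)) = g (fun k => t k (l k)) := by
  classical
  unfold gridC
  have step1 : ∀ e ∈ Fintype.piFinset (fun k => Finset.range (m k + 1)),
      (∑ j ∈ Fintype.piFinset (fun k => Finset.range (m k + 1)),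
          (∏ k, Wt (t k) (e k) (j k)) * g (fun k => t k (j k)))
        * ∏ k, phit (t k) (e k) (t k (l k))
      = ∑ j ∈ Fintype.piFinset (fun k => Finset.range (m k + 1)),
          g (fun k => t k (j k)) *
            ∏ k, (Wt (t k) (e k) (j k) * phit (t k) (e k) (t k (l k))) := by
    intro e _
    rw [Finset.sum_mul]
    apply Finset.sum_congr rfl
    intro j _
    rw [Finset.prod_mul_distrib]
    ring
  rw [Finset.sum_congr rfl step1, Finset.sum_comm]
  have step2 : ∀ j ∈ Fintype.piFinset (fun k => Finset.range (m k + 1)),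
      ∑ e ∈ Fintype.piFinset (fun k => Finset.range (m k + 1)),
          g (fun k => t k (j k)) *
            ∏ k, (Wt (t k) (e k) (j k) * phit (t k) (e k) (t k (l k)))
      = g (fun k => t k (j k)) * ∏ k, (if j k = l k then (1:ℝ) else 0) := by
    intro j hj
    rw [← Finset.mul_sum]
    congr 1
    rw [← Finset.prod_univ_sum (fun k => Finset.range (m k + 1))
      (fun k e => Wt (t k) e (j k) * phit (t k) e (t k (l k)))]
    apply Finset.prod_congr rfl
    intro k _
    have hjk : j k ≤ m k := by
      have := (Fintype.mem_piFinset.mp hj) k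
      simp only [Finset.mem_range] at this
      omega
    exact oneD_dual (t k) (m k) (hmono k) (j k) (l k) hjk (hl k)
  rw [Finset.sum_congr rfl step2]
  have hlmem : l ∈ Fintype.piFinset (fun k => Finset.range (m k + 1)) := by
    rw [Fintype.mem_piFinset]
    intro k
    simp only [Finset.mem_range]
    have := hl k
    omega
  rw [Finset.sum_eq_single_of_mem l hlmem]
  · simp
  · intro j _ hjl
    have : ∃ k, j k ≠ l k := by
      by_contra hcon
      push_neg at hcon
      exact hjl (funext hcon)
    obtain ⟨k, hk⟩ := this
    rw [Finset.prod_eq_zero (Finset.mem_univ k) (by rw [if_neg hk]), mul_zero]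

end Stage5
section Stage6
variable {d : ℕ}

/-- the divided-difference order associated to a 1-D basis index -/
def pOf : ℕ → ℕ
  | 0 => 0
  | 1 => 1
  | _ + 2 => 2

/-- base grid index -/
def bOf (e : ℕ) : ℕ := e - pOf e

/-- positive normalization factor -/
noncomputable def rhoOf (t : ℕ → ℝ) (e : ℕ) : ℝ := if 2 ≤ e then t e - t (e-2) else 1

lemma pOf_le_two (e : ℕ) : pOf e ≤ 2 := by
  match e with
  | 0 => simp [pOf]
  | 1 => simp [pOf]
  | (n+2) => simp [pOf]

lemma pOf_le_self (e : ℕ) : pOf e ≤ e := by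
  match e with
  | 0 => exact le_rfl
  | 1 => exact le_rfl
  | (n+2) => simp [pOf]

lemma pOf_eq_two (e : ℕ) (he : 2 ≤ e) : pOf e = 2 := by
  match e with
  | 0 => omega
  | 1 => omega
  | (n+2) => rfl

lemma bOf_add_pOf (e : ℕ) : bOf e + pOf e = e := by
  have := pOf_le_self e
  simp [bOf]
  omega

lemma Wt_outside (t : ℕ → ℝ) (e i : ℕ) (h : i < bOf e ∨ e < i) : Wt t e i = 0 := by
  match e with
  | 0 =>
    have h1 : ¬ (i = 0) := by simp [bOf, pOf] at h; omega
    simp [Wt, h1]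
  | 1 =>
    have h1 : ¬ (i = 1) := by simp [bOf, pOf] at h; omega
    have h2 : ¬ (i = 0) := by simp [bOf, pOf] at h; omega
    simp [Wt, dwt, h1, h2]
  | (n+2) =>
    have hb : bOf (n+2) = n := by simp [bOf, pOf]
    rw [hb] at h
    have h1 : ¬ (i = n+2) := by omega
    have h2 : ¬ (i = n+1) := by omega
    have h3 : ¬ (i = n) := by omega
    have e1 : n + 2 - 1 = n + 1 := by omega
    have e2 : n + 1 - 1 = n := by omega
    simp only [Wt, dwt, e1, e2, if_neg h1, if_neg h2, if_neg h3,
      if_neg (by omega : ¬ (n+2 = 0)), if_pos (by omega : 2 ≤ n+2)]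
    norm_num

lemma Wt_box0 (t : ℕ → ℝ) (a : Fin 1) :
    Wt t 0 ↑a = 1 / ∏ j ∈ Finset.univ.erase a, (t ↑a - t ↑j) := by
  have ha : a = 0 := Subsingleton.elim a 0
  subst ha
  have he : (Finset.univ.erase (0 : Fin 1)) = ∅ := by decide
  simp [Wt, he]

lemma Wt_box1 (t : ℕ → ℝ) (h01 : t 0 < t 1) (a : Fin 2) :
    Wt t 1 ↑a = 1 / ∏ j ∈ Finset.univ.erase a, (t ↑a - t ↑j) := by
  have hn : t 1 - t 0 ≠ 0 := sub_ne_zero.mpr (ne_of_gt h01)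
  have hn' : t 0 - t 1 ≠ 0 := sub_ne_zero.mpr (ne_of_lt h01)
  fin_cases a
  · rw [show (Finset.univ.erase (⟨0, by omega⟩ : Fin 2)) = {1} from by decide]
    simp only [Finset.prod_singleton, Wt, dwt]
    norm_num
    rw [inv_eq_one_div, div_eq_div_iff hn hn']
    ring
  · rw [show (Finset.univ.erase (⟨1, by omega⟩ : Fin 2)) = {0} from by decide]
    simp only [Finset.prod_singleton, Wt, dwt]
    norm_num

lemma Wt_box2 (t : ℕ → ℝ) (c : ℕ) (h01 : t c < t (c+1)) (h12 : t (c+1) < t (c+2)) (a : Fin 3) :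
    Wt t (c+2) (c + ↑a)
      = (t (c+2) - t c) / ∏ j ∈ Finset.univ.erase a, (t (c + ↑a) - t (c + ↑j)) := by
  have h02 : t c < t (c+2) := lt_trans h01 h12
  have n10 : t (c+1) - t c ≠ 0 := sub_ne_zero.mpr (ne_of_gt h01)
  have n21 : t (c+2) - t (c+1) ≠ 0 := sub_ne_zero.mpr (ne_of_gt h12)
  have n20 : t (c+2) - t c ≠ 0 := sub_ne_zero.mpr (ne_of_gt h02)
  have n01 : t c - t (c+1) ≠ 0 := sub_ne_zero.mpr (ne_of_lt h01)
  have n12 : t (c+1) - t (c+2) ≠ 0 := sub_ne_zero.mpr (ne_of_lt h12)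
  have n02 : t c - t (c+2) ≠ 0 := sub_ne_zero.mpr (ne_of_lt h02)
  have hW : ∀ i, Wt t (c+2) i
      = ((if i = c+2 then (1:ℝ) else 0) - if i = c+1 then 1 else 0) / (t (c+2) - t (c+1))
        - ((if i = c+1 then (1:ℝ) else 0) - if i = c then 1 else 0) / (t (c+1) - t c) := by
    intro i
    simp only [Wt, dwt, if_neg (by omega : ¬ (c+2 = 0)), if_pos (by omega : 2 ≤ c+2),
      show c+2-1 = c+1 from by omega, show c+1-1 = c from by omega]
  fin_cases a
  · rw [show (Finset.univ.erase (⟨0, by omega⟩ : Fin 3)) = {⟨1, by omega⟩, ⟨2, by omega⟩} from by decide]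
    rw [Finset.prod_pair (by decide), hW]
    simp only [Fin.mk_one]
    norm_num
    field_simp
    try ring
  · rw [show (Finset.univ.erase (⟨1, by omega⟩ : Fin 3)) = {⟨0, by omega⟩, ⟨2, by omega⟩} from by decide]
    rw [Finset.prod_pair (by decide), hW]
    norm_num
    field_simp
    try ring
  · rw [show (Finset.univ.erase (⟨2, by omega⟩ : Fin 3)) = {⟨0, by omega⟩, ⟨1, by omega⟩} from by decide]
    rw [Finset.prod_pair (by decide), hW]
    norm_num
    field_simp
    try ring

/-- unified per-coordinate weight formula inside the box -/
lemma Wt_box (t : ℕ → ℝ) (m e : ℕ) (hm : ∀ a b : ℕ, a < b → b ≤ m → t a < t b)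
    (he : e ≤ m) (a : Fin (pOf e + 1)) :
    Wt t e (bOf e + ↑a)
      = rhoOf t e / ∏ j ∈ Finset.univ.erase a, (t (bOf e + ↑a) - t (bOf e + ↑j)) := by
  match e with
  | 0 =>
    have hb : bOf 0 = 0 := rfl
    have hrho : rhoOf t 0 = 1 := by simp [rhoOf]
    rw [hb, hrho]
    simp only [zero_add]
    exact Wt_box0 t a
  | 1 =>
    have hb : bOf 1 = 0 := rfl
    have hrho : rhoOf t 1 = 1 := by simp [rhoOf]
    rw [hb, hrho]
    simp only [zero_add]
    exact Wt_box1 t (hm 0 1 (by omega) (by omega)) a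
  | (n+2) =>
    have hb : bOf (n+2) = n := by simp [bOf, pOf]
    have hrho : rhoOf t (n+2) = t (n+2) - t n := by
      simp only [rhoOf, if_pos (by omega : 2 ≤ n+2), Nat.add_sub_cancel]
    rw [hb, hrho]
    exact Wt_box2 t n (hm n (n+1) (by omega) (by omega)) (hm (n+1) (n+2) (by omega) (by omega)) a

lemma rhoOf_pos (t : ℕ → ℝ) (m e : ℕ) (hm : ∀ a b : ℕ, a < b → b ≤ m → t a < t b)
    (he : e ≤ m) : 0 < rhoOf t e := by
  unfold rhoOf
  by_cases h2 : 2 ≤ e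
  · rw [if_pos h2]
    have := hm (e-2) e (by omega) he
    linarith
  · rw [if_neg h2]; norm_num

/-- the key identification of tensor coefficients with divided differences -/
lemma gridC_eq_divdiff (g : (Fin d → ℝ) → ℝ) (t : Fin d → ℕ → ℝ) (m : Fin d → ℕ)
    (hmono : ∀ k, ∀ a b : ℕ, a < b → b ≤ m k → t k a < t k b)
    (e : Fin d → ℕ) (he : ∀ k, e k ≤ m k) :
    gridC g t m e = (∏ k, rhoOf (t k) (e k)) *
      mvDivDiff g (fun k => pOf (e k)) (fun k a => t k (bOf (e k) + ↑a)) := by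
  classical
  unfold gridC
  have hvanish : ∀ j ∈ Fintype.piFinset (fun k => Finset.range (m k + 1)),
      (∏ k, Wt (t k) (e k) (j k)) * g (fun k => t k (j k)) ≠ 0 →
      (∀ k, bOf (e k) ≤ j k ∧ j k ≤ e k) := by
    intro j _ hne k
    by_contra hcon
    apply hne
    rw [Finset.prod_eq_zero (Finset.mem_univ k) (Wt_outside (t k) (e k) (j k) (by omega)),
      zero_mul]
  rw [← Finset.sum_filter_of_ne hvanish]
  rw [Finset.sum_nbij'
    (i := fun (j : Fin d → ℕ) (k : Fin d) =>
      (⟨min (j k - bOf (e k)) (pOf (e k)), Nat.lt_succ_of_le (Nat.min_le_right _ _)⟩ :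
        Fin (pOf (e k) + 1)))
    (j := fun (a : (k : Fin d) → Fin (pOf (e k) + 1)) (k : Fin d) => bOf (e k) + ↑(a k))
    (g := fun (a : (k : Fin d) → Fin (pOf (e k) + 1)) =>
      (∏ k, rhoOf (t k) (e k)) *
        (g (fun k => t k (bOf (e k) + ↑(a k))) /
          ∏ k, ∏ j ∈ Finset.univ.erase (a k),
            (t k (bOf (e k) + ↑(a k)) - t k (bOf (e k) + ↑j))))
    (fun j _ => Finset.mem_univ _)
    ?_ ?_ ?_ ?_]
  · rw [← Finset.mul_sum]
    rfl
  · -- inverse maps into the filtered set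
    intro a _
    simp only [Finset.mem_filter, Fintype.mem_piFinset, Finset.mem_range]
    constructor
    · intro k
      have h1 : (a k : ℕ) ≤ pOf (e k) := Nat.lt_succ_iff.mp (a k).isLt
      have h2 := bOf_add_pOf (e k)
      have h3 := he k
      omega
    · intro k
      have h1 : (a k : ℕ) ≤ pOf (e k) := Nat.lt_succ_iff.mp (a k).isLt
      have h2 := bOf_add_pOf (e k)
      omega
  · -- left inverse
    intro j hj
    simp only [Finset.mem_filter] at hj
    funext k
    obtain ⟨h1, h2⟩ := hj.2 k
    have h3 := bOf_add_pOf (e k)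
    simp only
    omega
  · -- right inverse
    intro a _
    funext k
    ext
    simp only
    have h1 : (a k : ℕ) ≤ pOf (e k) := Nat.lt_succ_iff.mp (a k).isLt
    omega
  · -- values agree
    intro j hj
    simp only [Finset.mem_filter] at hj
    set a : (k : Fin d) → Fin (pOf (e k) + 1) := fun k =>
      (⟨min (j k - bOf (e k)) (pOf (e k)), Nat.lt_succ_of_le (Nat.min_le_right _ _)⟩ :
        Fin (pOf (e k) + 1)) with ha
    show (∏ k, Wt (t k) (e k) (j k)) * g (fun k => t k (j k))
      = (∏ k, rhoOf (t k) (e k)) * (g (fun k => t k (bOf (e k) + ↑(a k))) /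
          ∏ k, ∏ j' ∈ Finset.univ.erase (a k),
            (t k (bOf (e k) + ↑(a k)) - t k (bOf (e k) + ↑j')))
    have hjeq : ∀ k, bOf (e k) + ↑(a k) = j k := by
      intro k
      obtain ⟨h1, h2⟩ := hj.2 k
      have h3 := bOf_add_pOf (e k)
      simp only [ha]
      omega
    have h1 : (fun k => t k (bOf (e k) + ↑(a k))) = (fun k => t k (j k)) :=
      funext fun k => congrArg (t k) (hjeq k)
    rw [h1]
    have hW : ∀ k, Wt (t k) (e k) (j k) = rhoOf (t k) (e k) /
        ∏ j' ∈ Finset.univ.erase (a k),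
          (t k (bOf (e k) + ↑(a k)) - t k (bOf (e k) + ↑j')) := by
      intro k
      rw [← hjeq k]
      exact Wt_box (t k) (m k) (e k) (hmono k) (he k) (a k)
    rw [Finset.prod_congr rfl fun k _ => hW k, Finset.prod_div_distrib,
      div_mul_eq_mul_div, mul_div_assoc]

lemma gridC_nonpos (g : (Fin d → ℝ) → ℝ) (t : Fin d → ℕ → ℝ) (m : Fin d → ℕ)
    (hTCP : MemTCP d g)
    (hmono : ∀ k, ∀ a b : ℕ, a < b → b ≤ m k → t k a < t k b)
    (hrange : ∀ k j, j ≤ m k → t k j ∈ Set.Icc (0:ℝ) 1)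
    (e : Fin d → ℕ) (he : ∀ k, e k ≤ m k) (h2 : ∃ k, 2 ≤ e k) :
    gridC g t m e ≤ 0 := by
  rw [gridC_eq_divdiff g t m hmono e he]
  apply mul_nonpos_of_nonneg_of_nonpos
  · apply Finset.prod_nonneg
    intro k _
    exact le_of_lt (rhoOf_pos (t k) (m k) (e k) (hmono k) (he k))
  · apply hTCP
    · intro k; exact pOf_le_two (e k)
    · obtain ⟨k, hk⟩ := h2
      exact ⟨k, pOf_eq_two (e k) hk⟩
    · intro k
      intro a b hab
      apply hmono k
      · omega
      · have h1 : (b : ℕ) ≤ pOf (e k) := Nat.lt_succ_iff.mp b.isLt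
        have h2 := bOf_add_pOf (e k)
        have h3 := he k
        omega
    · intro k a
      apply hrange
      have h1 : (a : ℕ) ≤ pOf (e k) := Nat.lt_succ_iff.mp a.isLt
      have h2 := bOf_add_pOf (e k)
      have h3 := he k
      omega

end Stage6
section Stage7
variable {d : ℕ}

lemma gridC_vanish (s : ℕ) (g : (Fin d → ℝ) → ℝ) (t : Fin d → ℕ → ℝ) (m : Fin d → ℕ)
    (hIR : InteractionRestriction d s g)
    (hmono : ∀ k, ∀ a b : ℕ, a < b → b ≤ m k → t k a < t k b)
    (ht0 : ∀ k, t k 0 = 0) (ht1 : ∀ k, t k (m k) = 1)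
    (e : Fin d → ℕ) (he : ∀ k, e k ≤ m k)
    (hcard : s < (Finset.univ.filter (fun k => 1 ≤ e k)).card) :
    gridC g t m e = 0 := by
  classical
  set S : Finset (Fin d) := Finset.univ.filter (fun k => 1 ≤ e k) with hS
  have hmemS : ∀ k, k ∈ S ↔ 1 ≤ e k := by intro k; simp [hS]
  set Q : Fin d → Finset ℕ := fun k =>
    if 1 ≤ e k then (if e k = 1 then {e k} else {e k - 1, e k}) else {0} with hQ
  set u : Fin d → ℕ → ℕ → ℝ := fun k q i =>
    if 1 ≤ e k then
      ((if q = e k then 1 else -1) / (t k q - t k (q-1))) *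
        ((if i = q then 1 else 0) - (if i = q-1 then 1 else 0))
    else (if i = 0 then 1 else 0) with hu
  have hWu : ∀ k i, Wt (t k) (e k) i = ∑ q ∈ Q k, u k q i := by
    intro k i
    by_cases h1 : 1 ≤ e k
    · by_cases h2 : e k = 1
      · simp only [hQ, hu, if_pos h1, if_pos h2, Finset.sum_singleton, eq_self_iff_true, if_true]
        rw [show Wt (t k) (e k) i = dwt (t k) (e k) i - 0 from by simp [Wt, h2], dwt]
        ring
      · have h3 : 2 ≤ e k := by omega
        simp only [hQ, hu, if_pos h1, if_neg h2]
        rw [Finset.sum_pair (by omega : e k - 1 ≠ e k)]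
        rw [show Wt (t k) (e k) i = dwt (t k) (e k) i - dwt (t k) (e k - 1) i from by
          simp [Wt, show ¬ (e k = 0) from by omega, h3]]
        rw [if_neg (by omega : ¬ (e k - 1 = e k)), if_pos rfl]
        unfold dwt
        rw [show e k - 1 - 1 = e k - 2 from by omega]
        rw [show (if i = e k - 2 then (1:ℝ) else 0) = (if i = e k - 1 - 1 then 1 else 0) from by
          rw [show e k - 1 - 1 = e k - 2 from by omega]]
        rw [show e k - 1 - 1 = e k - 2 from by omega]
        ring
    · simp only [hQ, hu, if_neg h1, Finset.sum_singleton]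
      simp [Wt, show e k = 0 from by omega]
  unfold gridC
  have step1 : ∀ j ∈ Fintype.piFinset (fun k => Finset.range (m k + 1)),
      (∏ k, Wt (t k) (e k) (j k)) * g (fun k => t k (j k))
        = ∑ σ ∈ Fintype.piFinset Q, (∏ k, u k (σ k) (j k)) * g (fun k => t k (j k)) := by
    intro j _
    rw [Finset.prod_congr rfl (fun k _ => hWu k (j k)), Finset.prod_univ_sum, Finset.sum_mul]
  rw [Finset.sum_congr rfl step1, Finset.sum_comm]
  apply Finset.sum_eq_zero
  intro σ hσ
  have hσmem := Fintype.mem_piFinset.mp hσ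
  have hσS : ∀ k ∈ S, 1 ≤ σ k ∧ σ k ≤ m k ∧ (σ k = e k ∨ σ k = e k - 1) := by
    intro k hk
    have h1 : 1 ≤ e k := (hmemS k).mp hk
    have h2 := hσmem k
    rw [hQ] at h2
    simp only [if_pos h1] at h2
    by_cases h3 : e k = 1
    · rw [if_pos h3] at h2
      simp only [Finset.mem_singleton] at h2
      have := he k
      omega
    · rw [if_neg h3] at h2
      simp only [Finset.mem_insert, Finset.mem_singleton] at h2
      have := he k
      omega
  have hσnS : ∀ k, k ∉ S → σ k = 0 := by
    intro k hk
    have h1 : ¬ (1 ≤ e k) := fun h => hk ((hmemS k).mpr h)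
    have h2 := hσmem k
    rw [hQ] at h2
    simp only [if_neg h1, Finset.mem_singleton] at h2
    exact h2
  set xv : Fin d → ℝ := fun k => t k (σ k - 1) with hxv
  set yv : Fin d → ℝ := fun k => t k (σ k) with hyv
  set jR : Finset (Fin d) → Fin d → ℕ := fun R k =>
    if k ∈ R then σ k else if k ∈ S then σ k - 1 else 0 with hjR
  set coef : Fin d → ℝ := fun k => (if σ k = e k then 1 else -1) / (t k (σ k) - t k (σ k - 1))
    with hcoef
  set v : Fin d → ℕ → ℝ := fun k i => if k ∈ S then
      ((if i = σ k then (1:ℝ) else 0) - (if i = σ k - 1 then 1 else 0))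
    else (if i = 0 then 1 else 0) with hv
  -- split the weight product
  have hsplit : ∀ j : Fin d → ℕ, (∏ k, u k (σ k) (j k))
      = (∏ k ∈ S, coef k) * ∏ k, v k (j k) := by
    intro j
    have huv : ∀ k, u k (σ k) (j k) = (if k ∈ S then coef k else 1) * v k (j k) := by
      intro k
      by_cases hk : k ∈ S
      · rw [hu, hv, hcoef]
        simp only [if_pos hk, if_pos ((hmemS k).mp hk)]
      · rw [hu, hv]
        simp only [if_neg hk, if_neg (fun h => hk ((hmemS k).mpr h)), one_mul]
    rw [Finset.prod_congr rfl (fun k _ => huv k), Finset.prod_mul_distrib]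
    congr 1
    rw [Finset.prod_ite_mem Finset.univ S coef, Finset.univ_inter]
  -- expand the product of differences over subsets
  have hexp : ∀ j : Fin d → ℕ, (∏ k, v k (j k))
      = ∑ R ∈ S.powerset, (-1:ℝ)^(S.card - R.card) *
          ∏ k, (if j k = jR R k then (1:ℝ) else 0) := by
    intro j
    rw [← Finset.prod_mul_prod_compl S (fun k => v k (j k))]
    have hvS : ∀ k ∈ S, v k (j k)
        = (if j k = σ k then (1:ℝ) else 0) + (-(if j k = σ k - 1 then (1:ℝ) else 0)) := by
      intro k hk
      rw [hv]
      simp only [if_pos hk]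
      ring
    rw [Finset.prod_congr rfl hvS, Finset.prod_add, Finset.sum_mul]
    apply Finset.sum_congr rfl
    intro R hR
    have hRS : R ⊆ S := Finset.mem_powerset.mp hR
    have hneg : ∏ k ∈ S \ R, (-(if j k = σ k - 1 then (1:ℝ) else 0))
        = (-1:ℝ)^(S.card - R.card) * ∏ k ∈ S \ R, (if j k = σ k - 1 then (1:ℝ) else 0) := by
      rw [Finset.prod_congr rfl (fun k _ => (neg_one_mul _ : (-1:ℝ) * _ = _).symm),
        Finset.prod_mul_distrib, Finset.prod_const, Finset.card_sdiff_of_subset hRS]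
    rw [hneg]
    have hprod : (∏ k ∈ R, (if j k = σ k then (1:ℝ) else 0)) *
          (∏ k ∈ S \ R, (if j k = σ k - 1 then (1:ℝ) else 0)) *
          (∏ k ∈ Sᶜ, v k (j k))
        = ∏ k, (if j k = jR R k then (1:ℝ) else 0) := by
      rw [← Finset.prod_mul_prod_compl S (fun k => if j k = jR R k then (1:ℝ) else 0),
        ← Finset.prod_sdiff hRS (f := fun k => if j k = jR R k then (1:ℝ) else 0)]
      have e1 : ∀ k ∈ R, (if j k = σ k then (1:ℝ) else 0) = (if j k = jR R k then 1 else 0) := by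
        intro k hk
        rw [hjR]
        simp only [if_pos hk]
      have e2 : ∀ k ∈ S \ R, (if j k = σ k - 1 then (1:ℝ) else 0)
          = (if j k = jR R k then 1 else 0) := by
        intro k hk
        simp only [Finset.mem_sdiff] at hk
        rw [hjR]
        simp only [if_neg hk.2, if_pos hk.1]
      have e3 : ∀ k ∈ Sᶜ, v k (j k) = (if j k = jR R k then (1:ℝ) else 0) := by
        intro k hk
        simp only [Finset.mem_compl] at hk
        rw [hv, hjR]
        simp only [if_neg hk, if_neg (fun h => hk (hRS h))]
      rw [Finset.prod_congr rfl e1, Finset.prod_congr rfl e2, Finset.prod_congr rfl e3]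
      ring
    rw [← hprod]
    ring
  -- collapse the j-sum for each R
  have hjRmem : ∀ R ∈ S.powerset, jR R ∈ Fintype.piFinset (fun k => Finset.range (m k + 1)) := by
    intro R hR
    have hRS : R ⊆ S := Finset.mem_powerset.mp hR
    rw [Fintype.mem_piFinset]
    intro k
    simp only [Finset.mem_range, hjR]
    by_cases h1 : k ∈ R
    · rw [if_pos h1]
      have := (hσS k (hRS h1)).2.1
      omega
    · rw [if_neg h1]
      by_cases h2 : k ∈ S
      · rw [if_pos h2]
        have := (hσS k h2).2.1
        omega
      · rw [if_neg h2]
        omega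
  have hcollapse : ∀ R ∈ S.powerset,
      ∑ j ∈ Fintype.piFinset (fun k => Finset.range (m k + 1)),
        (∏ k, (if j k = jR R k then (1:ℝ) else 0)) * g (fun k => t k (j k))
      = g (fun k => t k (jR R k)) := by
    intro R hR
    rw [Finset.sum_eq_single_of_mem (jR R) (hjRmem R hR)]
    · rw [Finset.prod_congr rfl (fun k _ => if_pos rfl), Finset.prod_const_one, one_mul]
    · intro j _ hne
      have hex : ∃ k, j k ≠ jR R k := by
        by_contra hcon
        push_neg at hcon
        exact hne (funext hcon)
      obtain ⟨k, hk⟩ := hex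
      rw [Finset.prod_eq_zero (Finset.mem_univ k) (by rw [if_neg hk]), zero_mul]
  -- now compute the total inner sum
  have hterm : ∀ j ∈ Fintype.piFinset (fun k => Finset.range (m k + 1)),
      (∏ k, u k (σ k) (j k)) * g (fun k => t k (j k))
      = ∑ R ∈ S.powerset, (∏ k ∈ S, coef k) * ((-1:ℝ)^(S.card - R.card) *
          ((∏ k, (if j k = jR R k then (1:ℝ) else 0)) * g (fun k => t k (j k)))) := by
    intro j _
    rw [hsplit j, hexp j, mul_assoc, Finset.sum_mul, Finset.mul_sum]
    apply Finset.sum_congr rfl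
    intro R _
    ring
  rw [Finset.sum_congr rfl hterm, Finset.sum_comm]
  have hRsum : ∀ R ∈ S.powerset,
      ∑ j ∈ Fintype.piFinset (fun k => Finset.range (m k + 1)),
        (∏ k ∈ S, coef k) * ((-1:ℝ)^(S.card - R.card) *
          ((∏ k, (if j k = jR R k then (1:ℝ) else 0)) * g (fun k => t k (j k))))
      = (∏ k ∈ S, coef k) * ((-1:ℝ)^(S.card - R.card) * g (fun k => t k (jR R k))) := by
    intro R hR
    rw [← Finset.mul_sum, ← Finset.mul_sum, hcollapse R hR]
  rw [Finset.sum_congr rfl hRsum, ← Finset.mul_sum]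
  -- identify with the interaction-restriction sum
  have hcornfun : ∀ R : Finset (Fin d), (fun k => t k (jR R k))
      = (fun k => if k ∈ R then yv k else if k ∈ S then xv k else 0) := by
    intro R
    funext k
    rw [hjR, hxv, hyv]
    simp only
    rw [apply_ite (t k), apply_ite (t k), ht0 k]
  have hbounds : ∀ k ∈ S, 0 ≤ xv k ∧ xv k < yv k ∧ yv k ≤ 1 := by
    intro k hk
    obtain ⟨h1, h2, _⟩ := hσS k hk
    refine ⟨?_, ?_, ?_⟩
    · rw [hxv]
      simp only
      rcases Nat.eq_zero_or_pos (σ k - 1) with h3 | h3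
      · rw [h3, ht0 k]
      · rw [← ht0 k]
        exact le_of_lt (hmono k 0 (σ k - 1) h3 (by omega))
    · rw [hxv, hyv]
      exact hmono k (σ k - 1) (σ k) (by omega) h2
    · rw [hyv]
      simp only
      rcases Nat.eq_or_lt_of_le h2 with h3 | h3
      · rw [h3, ht1 k]
      · rw [← ht1 k]
        exact le_of_lt (hmono k (σ k) (m k) h3 le_rfl)
  rw [Finset.sum_congr rfl (fun R _ => by rw [hcornfun R]), hIR S hcard xv yv hbounds, mul_zero]

end Stage7
section Stage8
variable {d : ℕ}

lemma exists_grid (n : ℕ) (x : Fin n → Fin d → ℝ) (hx : ∀ i, x i ∈ unitCube (Fin d)) :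
    ∃ (m : Fin d → ℕ) (t : Fin d → ℕ → ℝ),
      (∀ k, 1 ≤ m k) ∧ (∀ k, ∀ a b : ℕ, a < b → b ≤ m k → t k a < t k b) ∧
      (∀ k, t k 0 = 0) ∧ (∀ k, t k (m k) = 1) ∧
      (∀ k j, j ≤ m k → t k j ∈ Set.Icc (0:ℝ) 1) ∧
      (∀ i k, ∃ l, l ≤ m k ∧ t k l = x i k) := by
  classical
  set G : Fin d → Finset ℝ := fun k =>
    insert 0 (insert 1 (Finset.image (fun i => x i k) Finset.univ)) with hG
  have hG0 : ∀ k, (0:ℝ) ∈ G k := fun k => Finset.mem_insert_self 0 _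
  have hG1 : ∀ k, (1:ℝ) ∈ G k := fun k =>
    Finset.mem_insert_of_mem (Finset.mem_insert_self 1 _)
  have hGx : ∀ i k, x i k ∈ G k := fun i k =>
    Finset.mem_insert_of_mem (Finset.mem_insert_of_mem
      (Finset.mem_image_of_mem _ (Finset.mem_univ i)))
  have hGsub : ∀ k, ∀ z ∈ G k, z ∈ Set.Icc (0:ℝ) 1 := by
    intro k z hz
    rw [hG] at hz
    simp only [Finset.mem_insert, Finset.mem_image] at hz
    rcases hz with h | h | ⟨i, _, rfl⟩
    · rw [h]; constructor <;> norm_num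
    · rw [h]; constructor <;> norm_num
    · exact (hx i) k (Set.mem_univ k)
  have hcard2 : ∀ k, 2 ≤ (G k).card := by
    intro k
    have : ({(0:ℝ), 1} : Finset ℝ) ⊆ G k := by
      intro z hz
      simp only [Finset.mem_insert, Finset.mem_singleton] at hz
      rcases hz with rfl | rfl
      exacts [hG0 k, hG1 k]
    calc 2 = ({(0:ℝ), 1} : Finset ℝ).card := by norm_num
    _ ≤ (G k).card := Finset.card_le_card this
  set m : Fin d → ℕ := fun k => (G k).card - 1 with hm
  have hcardeq : ∀ k, (G k).card = m k + 1 := by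
    intro k
    have := hcard2 k
    rw [hm]
    simp only
    omega
  set τ : (k : Fin d) → Fin (m k + 1) ≃o {z // z ∈ G k} := fun k =>
    (G k).orderIsoOfFin (hcardeq k) with hτ
  set t : Fin d → ℕ → ℝ := fun k j => ↑(τ k ⟨min j (m k), by omega⟩) with ht
  have hmem : ∀ k j, t k j ∈ G k := fun k j => (τ k _).2
  have hmono : ∀ k, ∀ a b : ℕ, a < b → b ≤ m k → t k a < t k b := by
    intro k a b hab hbm
    rw [ht]
    simp only
    have h1 : min a (m k) = a := by omega
    have h2 : min b (m k) = b := by omega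
    have : (⟨min a (m k), by omega⟩ : Fin (m k + 1)) < ⟨min b (m k), by omega⟩ := by
      simp only [Fin.mk_lt_mk]
      omega
    exact (τ k).lt_iff_lt.mpr this
  have hsurj : ∀ k, ∀ z ∈ G k, ∃ a : Fin (m k + 1), ((τ k a) : ℝ) = z := by
    intro k z hz
    obtain ⟨a, ha⟩ := (τ k).surjective ⟨z, hz⟩
    exact ⟨a, by rw [ha]⟩
  have hmin : ∀ k, t k 0 = 0 := by
    intro k
    obtain ⟨a, ha⟩ := hsurj k 0 (hG0 k)
    have h1 : (⟨min 0 (m k), by omega⟩ : Fin (m k + 1)) ≤ a := by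
      simp only [Fin.le_def]
      omega
    have h2 : t k 0 ≤ 0 := by
      rw [ht, ← ha]
      exact_mod_cast (τ k).le_iff_le.mpr h1
    have h3 : 0 ≤ t k 0 := (hGsub k _ (hmem k 0)).1
    linarith
  have hmax : ∀ k, t k (m k) = 1 := by
    intro k
    obtain ⟨a, ha⟩ := hsurj k 1 (hG1 k)
    have h1 : a ≤ (⟨min (m k) (m k), by omega⟩ : Fin (m k + 1)) := by
      simp only [Fin.le_def]
      have := a.isLt
      omega
    have h2 : (1:ℝ) ≤ t k (m k) := by
      rw [ht, ← ha]
      exact_mod_cast (τ k).le_iff_le.mpr h1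
    have h3 : t k (m k) ≤ 1 := (hGsub k _ (hmem k (m k))).2
    linarith
  refine ⟨m, t, ?_, hmono, hmin, hmax, ?_, ?_⟩
  · intro k
    have := hcard2 k
    rw [hm]
    simp only
    omega
  · intro k j _
    exact hGsub k _ (hmem k j)
  · intro i k
    obtain ⟨a, ha⟩ := hsurj k (x i k) (hGx i k)
    refine ⟨(a : ℕ), by have := a.isLt; omega, ?_⟩
    have h1 : min (a : ℕ) (m k) = (a : ℕ) := by
      have := a.isLt
      omega
    have h2 : (⟨min (a:ℕ) (m k), by omega⟩ : Fin (m k + 1)) = a := by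
      ext
      exact h1
    rw [ht]
    simp only
    rw [h2, ha]

lemma measurableSet_tcSupport (S : Finset (Fin d)) : MeasurableSet (tcSupport d S) := by
  have h : tcSupport d S =
      (⋂ j ∈ S, (fun u : Fin d → ℝ => u j) ⁻¹' Set.Ico (0:ℝ) 1) ∩
        (⋃ j ∈ S, {u : Fin d → ℝ | u j ≠ 0}) := by
    ext u
    simp [tcSupport]
  rw [h]
  apply MeasurableSet.inter
  · exact MeasurableSet.biInter (Set.to_countable _)
      (fun j _ => (measurable_pi_apply j) measurableSet_Ico)
  · refine MeasurableSet.biUnion (Set.to_countable _) (fun j _ => ?_)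
    have : {u : Fin d → ℝ | u j ≠ 0} = (fun u : Fin d → ℝ => u j) ⁻¹' ({(0:ℝ)}ᶜ) := rfl
    rw [this]
    exact (measurable_pi_apply j) (measurableSet_singleton (0:ℝ)).compl

lemma integrable_dirac' (f : (Fin d → ℝ) → ℝ) (hf : Continuous f) (a : Fin d → ℝ) :
    MeasureTheory.Integrable f (MeasureTheory.Measure.dirac a) := by
  refine ⟨hf.aestronglyMeasurable, ?_⟩
  simp [MeasureTheory.HasFiniteIntegral, MeasureTheory.lintegral_dirac]

lemma integral_finset_smul_dirac {γ : Type*} (E : Finset γ) (c : γ → ℝ)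
    (pt : γ → (Fin d → ℝ)) (f : (Fin d → ℝ) → ℝ) (hf : Continuous f) :
    ∫ z, f z ∂(∑ e ∈ E, ENNReal.ofReal (c e) • MeasureTheory.Measure.dirac (pt e))
      = ∑ e ∈ E, (ENNReal.ofReal (c e)).toReal * f (pt e) := by
  rw [MeasureTheory.integral_finset_sum_measure (fun e _ =>
    (integrable_dirac' f hf (pt e)).smul_measure ENNReal.ofReal_ne_top)]
  apply Finset.sum_congr rfl
  intro e _
  rw [MeasureTheory.integral_smul_measure, MeasureTheory.integral_dirac]
  rfl

end Stage8
section Stage9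
variable {d : ℕ}

lemma exists_TC_interpolant (s n : ℕ) (x : Fin n → Fin d → ℝ)
    (hx : ∀ i, x i ∈ unitCube (Fin d)) (g : (Fin d → ℝ) → ℝ)
    (hTCP : MemTCP d g) (hIR : InteractionRestriction d s g) :
    ∃ r : TCRep d, ∀ i, r.toFun s (x i) = g (x i) := by
  classical
  obtain ⟨m, t, hm1, hmono, ht0, ht1, hrange, hdesign⟩ := exists_grid n x hx
  set idx : Finset (Fin d → ℕ) := Fintype.piFinset (fun k => Finset.range (m k + 1)) with hidx
  set Se : (Fin d → ℕ) → Finset (Fin d) :=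
    fun e => Finset.univ.filter (fun k => 1 ≤ e k) with hSe
  set eS : Finset (Fin d) → (Fin d → ℕ) := fun S k => if k ∈ S then 1 else 0 with heS
  set ES : Finset (Fin d) → Finset (Fin d → ℕ) :=
    fun S => idx.filter (fun e => Se e = S ∧ e ≠ eS S) with hES
  set C : (Fin d → ℕ) → ℝ := gridC g t m with hC
  set knot : (Fin d → ℕ) → (Fin d → ℝ) :=
    fun e k => if 1 ≤ e k then t k (e k - 1) else 0 with hknot
  have hidxmem : ∀ e ∈ idx, ∀ k, e k ≤ m k := by
    intro e he k
    have := (Fintype.mem_piFinset.mp he) k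
    simp only [Finset.mem_range] at this
    omega
  have hmemSe : ∀ e, ∀ k, k ∈ Se e ↔ 1 ≤ e k := by
    intro e k; simp [hSe]
  have hES2 : ∀ S : Finset (Fin d), ∀ e ∈ ES S, ∃ k ∈ S, 2 ≤ e k := by
    intro S e he
    rw [hES] at he
    simp only [Finset.mem_filter] at he
    obtain ⟨heidx, heSe, hene⟩ := he
    by_contra hcon
    push_neg at hcon
    apply hene
    funext k
    by_cases hk : k ∈ S
    · have h1 : 1 ≤ e k := (hmemSe e k).mp (heSe ▸ hk)
      have h2 := hcon k hk
      rw [heS]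
      simp only [if_pos hk]
      omega
    · have h1 : ¬ (1 ≤ e k) := fun h => hk (heSe ▸ (hmemSe e k).mpr h)
      rw [heS]
      simp only [if_neg hk]
      omega
  have hCnonpos : ∀ S : Finset (Fin d), ∀ e ∈ ES S, C e ≤ 0 := by
    intro S e he
    rw [hES] at he
    simp only [Finset.mem_filter] at he
    obtain ⟨k, _, hk2⟩ := hES2 S e (by rw [hES]; simp only [Finset.mem_filter]; exact he)
    exact gridC_nonpos g t m hTCP hmono (fun k j hj => hrange k j hj)
      e (hidxmem e he.1) ⟨k, hk2⟩
  have hknotmem : ∀ S : Finset (Fin d), ∀ e ∈ ES S, knot e ∈ tcSupport d S := by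
    intro S e he
    have he' := he
    rw [hES] at he'
    simp only [Finset.mem_filter] at he'
    obtain ⟨heidx, heSe, hene⟩ := he'
    constructor
    · intro j hj
      have h1 : 1 ≤ e j := (hmemSe e j).mp (heSe ▸ hj)
      have h2 : e j ≤ m j := hidxmem e heidx j
      rw [hknot]
      simp only [if_pos h1, Set.mem_Ico]
      constructor
      · exact (hrange j (e j - 1) (by omega)).1
      · rw [← ht1 j]
        exact hmono j (e j - 1) (m j) (by omega) le_rfl
    · obtain ⟨k, hkS, hk2⟩ := hES2 S e he
      refine ⟨k, hkS, ?_⟩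
      rw [hknot]
      simp only [if_pos (by omega : 1 ≤ e k)]
      have : t k 0 < t k (e k - 1) := hmono k 0 (e k - 1) (by omega)
        (by have := hidxmem e heidx k; omega)
      rw [ht0 k] at this
      exact ne_of_gt this
  refine ⟨⟨C (fun _ => 0), fun S => C (eS S),
    fun S => ∑ e ∈ ES S, ENNReal.ofReal (-(C e)) • MeasureTheory.Measure.dirac (knot e),
    ?_, ?_⟩, ?_⟩
  · -- finiteness
    intro S
    constructor
    rw [MeasureTheory.Measure.finset_sum_apply]
    apply ENNReal.sum_lt_top.mpr
    intro e _
    rw [MeasureTheory.Measure.smul_apply, smul_eq_mul, measure_univ, mul_one]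
    exact ENNReal.ofReal_lt_top
  · -- support
    intro S
    rw [MeasureTheory.Measure.finset_sum_apply]
    apply Finset.sum_eq_zero
    intro e he
    rw [MeasureTheory.Measure.smul_apply,
      MeasureTheory.Measure.dirac_apply' _ (measurableSet_tcSupport S).compl]
    rw [Set.indicator_of_notMem (by simp [hknotmem S e he])]
    simp
  · -- values at design points
    intro i
    have hl := fun k => hdesign i k
    choose l hlm hleq using hl
    have hxfun : x i = fun k => t k (l k) := funext fun k => (hleq k).symm
    have key := mv_repro g t m hmono l hlm
    -- express everything via the fiber decomposition
    set P : (Fin d → ℕ) → ℝ := fun e => ∏ k, phit (t k) (e k) (t k (l k)) with hP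
    set F : (Fin d → ℕ) → ℝ := fun e => C e * P e with hF
    have hfibers : ∑ S : Finset (Fin d), ∑ e ∈ idx.filter (fun e => Se e = S), F e
        = ∑ e ∈ idx, F e := Finset.sum_fiberwise idx Se F
    have hfib0 : idx.filter (fun e => Se e = ∅) = {(fun _ => 0 : Fin d → ℕ)} := by
      ext e
      simp only [Finset.mem_filter, Finset.mem_singleton]
      constructor
      · rintro ⟨he, hSe0⟩
        funext k
        have h1 : k ∉ Se e := by rw [hSe0]; exact Finset.notMem_empty k
        have h2 : ¬ (1 ≤ e k) := fun h => h1 ((hmemSe e k).mpr h)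
        omega
      · rintro rfl
        constructor
        · rw [hidx, Fintype.mem_piFinset]
          intro k
          simp
        · rw [Finset.eq_empty_iff_forall_notMem]
          intro k hk
          have := (hmemSe _ k).mp hk
          omega
    have hval0 : F (fun _ => 0) = C (fun _ => 0) := by
      rw [hF]
      simp only
      rw [hP]
      simp only
      rw [Finset.prod_congr rfl (fun k _ => by rw [phit, if_pos rfl]), Finset.prod_const_one,
        mul_one]
    have heSidx : ∀ S : Finset (Fin d), eS S ∈ idx := by
      intro S
      rw [hidx, Fintype.mem_piFinset]
      intro k
      simp only [Finset.mem_range, heS]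
      have := hm1 k
      by_cases hk : k ∈ S <;> simp [hk] <;> omega
    have hSeeS : ∀ S : Finset (Fin d), Se (eS S) = S := by
      intro S
      ext k
      rw [hmemSe]
      rw [heS]
      by_cases hk : k ∈ S <;> simp [hk]
    have hfibS : ∀ S ∈ smallSets d s, idx.filter (fun e => Se e = S) = insert (eS S) (ES S) := by
      intro S _
      ext e
      simp only [Finset.mem_filter, Finset.mem_insert, hES]
      constructor
      · rintro ⟨h1, h2⟩
        by_cases h3 : e = eS S
        · exact Or.inl h3
        · exact Or.inr ⟨h1, h2, h3⟩
      · rintro (rfl | ⟨h1, h2, h3⟩)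
        · exact ⟨heSidx S, hSeeS S⟩
        · exact ⟨h1, h2⟩
    have heSnotin : ∀ S : Finset (Fin d), eS S ∉ ES S := by
      intro S hmem
      rw [hES] at hmem
      simp only [Finset.mem_filter] at hmem
      exact hmem.2.2 rfl
    have hPe : ∀ S ∈ smallSets d s, P (eS S) = ∏ j ∈ S, x i j := by
      intro S _
      rw [hP]
      simp only
      have hk : ∀ k, phit (t k) (eS S k) (t k (l k)) = if k ∈ S then x i k else 1 := by
        intro k
        rw [heS]
        by_cases hkS : k ∈ S
        · simp only [if_pos hkS]
          rw [phit, if_neg (by omega : ¬ ((1:ℕ) = 0)), show (1:ℕ) - 1 = 0 from rfl,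
            ht0 k, sub_zero, hleq k]
          exact max_eq_left ((hx i k (Set.mem_univ k)).1)
        · simp only [if_neg hkS]
          rw [phit, if_pos rfl]
      rw [Finset.prod_congr rfl (fun k _ => hk k), Finset.prod_ite_mem, Finset.univ_inter]
    have hPES : ∀ S : Finset (Fin d), ∀ e ∈ ES S,
        P e = ∏ j ∈ S, max (x i j - knot e j) 0 := by
      intro S e he
      rw [hES] at he
      simp only [Finset.mem_filter] at he
      obtain ⟨heidx, heSe, _⟩ := he
      rw [hP]
      simp only
      have hk : ∀ k, phit (t k) (e k) (t k (l k))
          = if k ∈ S then max (x i k - knot e k) 0 else 1 := by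
        intro k
        by_cases hkS : k ∈ S
        · have h1 : 1 ≤ e k := (hmemSe e k).mp (heSe ▸ hkS)
          rw [if_pos hkS, phit, if_neg (by omega : ¬ (e k = 0)), hknot]
          simp only [if_pos h1]
          rw [hleq k]
        · have h1 : ¬ (1 ≤ e k) := fun h => hkS (heSe ▸ (hmemSe e k).mpr h)
          rw [if_neg hkS, phit, if_pos (by omega : e k = 0)]
      rw [Finset.prod_congr rfl (fun k _ => hk k), Finset.prod_ite_mem, Finset.univ_inter]
    have hbig : ∀ S : Finset (Fin d), S ∉ smallSets d s → S ≠ ∅ →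
        ∑ e ∈ idx.filter (fun e => Se e = S), F e = 0 := by
      intro S hS hSne
      apply Finset.sum_eq_zero
      intro e he
      simp only [Finset.mem_filter] at he
      have hcard : s < S.card := by
        have h1 : 1 ≤ S.card := Finset.card_pos.mpr (Finset.nonempty_of_ne_empty hSne)
        simp only [smallSets, Finset.mem_filter, Finset.mem_univ, true_and] at hS
        omega
      have : C e = 0 := by
        rw [hC]
        apply gridC_vanish s g t m hIR hmono ht0 ht1 e (hidxmem e he.1)
        rw [show Finset.univ.filter (fun k => 1 ≤ e k) = Se e from by rw [hSe], he.2]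
        exact hcard
      rw [hF]
      simp only
      rw [this, zero_mul]
    -- the right-hand side
    have hRHS : g (x i) = C (fun _ => 0) + ∑ S ∈ smallSets d s,
        (C (eS S) * ∏ j ∈ S, x i j +
          ∑ e ∈ ES S, C e * ∏ j ∈ S, max (x i j - knot e j) 0) := by
      have hg : g (x i) = ∑ e ∈ idx, F e := by rw [hxfun]; exact key.symm
      rw [hg, ← hfibers]
      have hsub : insert (∅ : Finset (Fin d)) (smallSets d s) ⊆ Finset.univ :=
        Finset.subset_univ _
      rw [← Finset.sum_subset hsub (fun S _ hS => by
        have h1 : S ≠ ∅ := fun h => hS (by rw [h]; exact Finset.mem_insert_self ∅ _)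
        have h2 : S ∉ smallSets d s := fun h => hS (Finset.mem_insert_of_mem h)
        exact hbig S h2 h1)]
      rw [Finset.sum_insert (by
        intro hmem
        simp only [smallSets, Finset.mem_filter] at hmem
        simp at hmem)]
      congr 1
      · rw [hfib0, Finset.sum_singleton, hval0]
      · apply Finset.sum_congr rfl
        intro S hS
        rw [hfibS S hS, Finset.sum_insert (heSnotin S)]
        congr 1
        · rw [hF]
          simp only
          rw [hPe S hS]
        · apply Finset.sum_congr rfl
          intro e he
          rw [hF]
          simp only
          rw [hPES S e he]
    -- the left-hand side
    rw [hRHS]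
    unfold TCRep.toFun
    simp only
    have hint : ∀ S ∈ smallSets d s,
        (∫ u, (∏ j ∈ S, max (x i j - u j) 0)
          ∂(∑ e ∈ ES S, ENNReal.ofReal (-(C e)) • MeasureTheory.Measure.dirac (knot e)))
        = ∑ e ∈ ES S, (-(C e)) * ∏ j ∈ S, max (x i j - knot e j) 0 := by
      intro S hS
      rw [integral_finset_smul_dirac (ES S) (fun e => -(C e)) knot _
        (continuous_hingeProd S (x i))]
      apply Finset.sum_congr rfl
      intro e he
      rw [ENNReal.toReal_ofReal (by linarith [hCnonpos S e he])]
    rw [Finset.sum_congr rfl hint]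
    have halg : ∀ S ∈ smallSets d s,
        ∑ e ∈ ES S, (-(C e)) * ∏ j ∈ S, max (x i j - knot e j) 0
        = -∑ e ∈ ES S, C e * ∏ j ∈ S, max (x i j - knot e j) 0 := by
      intro S _
      rw [← Finset.sum_neg_distrib]
      exact Finset.sum_congr rfl fun e _ => by ring
    rw [Finset.sum_congr rfl halg, Finset.sum_neg_distrib, Finset.sum_add_distrib]
    ring

end Stage9
/-- **Proposition (reduction from the Popoviciu class).**
Every least squares minimizer over `F^{d,s}_TC` also minimizes the least squares
criterion over all `f ∈ F^d_TCP` satisfying the interaction restriction condition of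
order `s`; in particular (when `s = d`), it minimizes over the entire class `F^d_TCP`. -/
theorem lse_reduction_from_popoviciu (d s n : ℕ) (hs1 : 1 ≤ s) (hsd : s ≤ d)
    (x : Fin n → Fin d → ℝ) (hx : ∀ i, x i ∈ unitCube (Fin d)) (y : Fin n → ℝ)
    (fhat : (Fin d → ℝ) → ℝ) (hmem : MemTC d s fhat)
    (hmin : ∀ g, MemTC d s g →
      ∑ i, (y i - fhat (x i)) ^ 2 ≤ ∑ i, (y i - g (x i)) ^ 2) :
    (MemTCP d fhat ∧ InteractionRestriction d s fhat ∧
      ∀ g, MemTCP d g → InteractionRestriction d s g →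
        ∑ i, (y i - fhat (x i)) ^ 2 ≤ ∑ i, (y i - g (x i)) ^ 2) ∧
    (s = d → ∀ g, MemTCP d g →
      ∑ i, (y i - fhat (x i)) ^ 2 ≤ ∑ i, (y i - g (x i)) ^ 2) := by
  have h3 : ∀ g, MemTCP d g → InteractionRestriction d s g →
      ∑ i, (y i - fhat (x i)) ^ 2 ≤ ∑ i, (y i - g (x i)) ^ 2 := by
    intro g hg hgIR
    obtain ⟨r, hr⟩ := exists_TC_interpolant s n x hx g hg hgIR
    have hle := hmin (r.toFun s) ⟨r, fun _ _ => rfl⟩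
    calc ∑ i, (y i - fhat (x i)) ^ 2 ≤ ∑ i, (y i - r.toFun s (x i)) ^ 2 := hle
    _ = ∑ i, (y i - g (x i)) ^ 2 := by
        apply Finset.sum_congr rfl
        intro i _
        rw [hr i]
  refine ⟨⟨memTC_memTCP s fhat hmem, memTC_IR s fhat hmem, h3⟩, ?_⟩
  rintro rfl g hg
  apply h3 g hg
  intro S hcard
  exfalso
  have h1 : S.card ≤ s := by
    have := Finset.card_le_univ S
    simpa using this
  omega

end
end

section
/- Suppose the design points form the equally-spaced lattice {x^(1),…,x^(n)} = Π_{k=1}^d {0, 1/n_k, …, (n_k−1)/n_k} with integers n_k ≥ 2. If f ∈ F^d_TCP, then V_design(f) ≤ Σ_{∅≠S⊆[d]} [ D_S^0(f) − D_S^1(f) ], where D_S^0(f) is the divided difference of f of order 1_S at the points (0, 1/n_k) in each coordinate k ∈ S and the point 0 in each coordinate k ∉ S, and D_S^1(f) is the divided difference of f of order 1_S at the points ((n_k−1)/n_k, 1) in each coordinate k ∈ S and the point 0 in each coordinate k ∉ S. -/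
open MeasureTheory ProbabilityTheory

noncomputable section

namespace VUB
open Finset

/-- indicator part of the discrete weight at knot `j`, grid point `b` (both as naturals). -/
def WI (j b : ℕ) : ℝ :=
  (if b = j + 1 then 1 else 0) - 2 * (if b = j then 1 else 0)
    + (if j = b + 1 then 1 else 0) + (if j = 0 ∧ b = 0 then 1 else 0)

/-- the discrete weight vectors: `none` is the constant term, `some j` the hinge at `j/n`. -/
def Wn (n : ℕ) : Option (Fin n) → Fin (n + 1) → ℝ
  | none => fun b => if (b : ℕ) = 0 then 1 else 0
  | some j => fun b => (n : ℝ) * WI (j : ℕ) (b : ℕ)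

/-- hinge basis evaluated at grid points. -/
def phe (n : ℕ) : Option (Fin n) → Fin (n + 1) → ℝ
  | none => fun _ => 1
  | some j => fun i => max ((i : ℝ) / n - (j : ℝ) / n) 0

lemma sum_ite_val {n : ℕ} (c : ℕ) (g : ℕ → ℝ) :
    (∑ j : Fin n, if (j : ℕ) = c then g (j : ℕ) else 0) = if c < n then g c else 0 := by
  by_cases h : c < n
  · rw [if_pos h, Finset.sum_eq_single (⟨c, h⟩ : Fin n)]
    · simp
    · intro j _ hj
      rw [if_neg]
      intro hc
      exact hj (Fin.ext hc)
    · simp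
  · rw [if_neg h]
    apply Finset.sum_eq_zero
    intro j _
    rw [if_neg]
    intro hc
    exact h (hc ▸ j.isLt)

lemma sum_WI (n : ℕ) (hn : 2 ≤ n) (b : ℕ) (hb : b ≤ n) (g : ℕ → ℝ) :
    (∑ j : Fin n, WI (j : ℕ) b * g (j : ℕ)) =
      (if 1 ≤ b then g (b - 1) else 0) - 2 * (if b < n then g b else 0)
        + (if b + 1 < n then g (b + 1) else 0) + (if b = 0 then g 0 else 0) := by
  have expand : ∀ j : Fin n, WI (j : ℕ) b * g (j : ℕ) =
      ((if b = (j : ℕ) + 1 then 1 else 0) * g (j : ℕ)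
        - 2 * ((if b = (j : ℕ) then 1 else 0) * g (j : ℕ)))
        + ((if (j : ℕ) = b + 1 then 1 else 0) * g (j : ℕ)
        + (if (j : ℕ) = 0 ∧ b = 0 then 1 else 0) * g (j : ℕ)) := by
    intro j; unfold WI; ring
  rw [Finset.sum_congr rfl (fun j _ => expand j), Finset.sum_add_distrib,
    Finset.sum_add_distrib, Finset.sum_sub_distrib, ← Finset.mul_sum]
  by_cases hb0 : b = 0
  · subst hb0
    have h1 : (∑ j : Fin n, (if 0 = (j : ℕ) + 1 then (1:ℝ) else 0) * g (j : ℕ)) = 0 := by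
      apply Finset.sum_eq_zero; intro j _; rw [if_neg (by omega)]; ring
    have h2 : (∑ j : Fin n, (if 0 = (j : ℕ) then (1:ℝ) else 0) * g (j : ℕ)) = g 0 := by
      have : ∀ j : Fin n, (if 0 = (j : ℕ) then (1:ℝ) else 0) * g (j : ℕ)
          = if (j : ℕ) = 0 then g (j : ℕ) else 0 := by
        intro j; by_cases h : (j : ℕ) = 0 <;> simp [h, eq_comm]
      rw [Finset.sum_congr rfl fun j _ => this j, sum_ite_val]
      rw [if_pos (by omega)]
    have h3 : (∑ j : Fin n, (if (j : ℕ) = 0 + 1 then (1:ℝ) else 0) * g (j : ℕ)) = g 1 := by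
      have : ∀ j : Fin n, (if (j : ℕ) = 0 + 1 then (1:ℝ) else 0) * g (j : ℕ)
          = if (j : ℕ) = 1 then g (j : ℕ) else 0 := by
        intro j; by_cases h : (j : ℕ) = 1 <;> simp [h]
      rw [Finset.sum_congr rfl fun j _ => this j, sum_ite_val, if_pos (by omega)]
    have h4 : (∑ j : Fin n, (if (j : ℕ) = 0 ∧ (0:ℕ) = 0 then (1:ℝ) else 0) * g (j : ℕ)) = g 0 := by
      have : ∀ j : Fin n, (if (j : ℕ) = 0 ∧ (0:ℕ) = 0 then (1:ℝ) else 0) * g (j : ℕ)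
          = if (j : ℕ) = 0 then g (j : ℕ) else 0 := by
        intro j; by_cases h : (j : ℕ) = 0 <;> simp [h]
      rw [Finset.sum_congr rfl fun j _ => this j, sum_ite_val, if_pos (by omega)]
    rw [h1, h2, h3, h4]
    rw [if_neg (by omega), if_pos (by omega), if_pos rfl, if_pos (by omega : 0 + 1 < n)]
    ring
  · obtain ⟨B, rfl⟩ : ∃ B, b = B + 1 := ⟨b - 1, by omega⟩
    have h1 : (∑ j : Fin n, (if B + 1 = (j : ℕ) + 1 then (1:ℝ) else 0) * g (j : ℕ))
        = if B < n then g B else 0 := by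
      have : ∀ j : Fin n, (if B + 1 = (j : ℕ) + 1 then (1:ℝ) else 0) * g (j : ℕ)
          = if (j : ℕ) = B then g (j : ℕ) else 0 := by
        intro j; by_cases h : (j : ℕ) = B
        · simp [h]
        · rw [if_neg (by omega), if_neg h]; ring
      rw [Finset.sum_congr rfl fun j _ => this j, sum_ite_val]
    have h2 : (∑ j : Fin n, (if B + 1 = (j : ℕ) then (1:ℝ) else 0) * g (j : ℕ))
        = if B + 1 < n then g (B + 1) else 0 := by
      have : ∀ j : Fin n, (if B + 1 = (j : ℕ) then (1:ℝ) else 0) * g (j : ℕ)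
          = if (j : ℕ) = B + 1 then g (j : ℕ) else 0 := by
        intro j; by_cases h : (j : ℕ) = B + 1
        · simp [h]
        · rw [if_neg (by omega), if_neg h]; ring
      rw [Finset.sum_congr rfl fun j _ => this j, sum_ite_val]
    have h3 : (∑ j : Fin n, (if (j : ℕ) = B + 1 + 1 then (1:ℝ) else 0) * g (j : ℕ))
        = if B + 1 + 1 < n then g (B + 1 + 1) else 0 := by
      have : ∀ j : Fin n, (if (j : ℕ) = B + 1 + 1 then (1:ℝ) else 0) * g (j : ℕ)
          = if (j : ℕ) = B + 2 then g (j : ℕ) else 0 := by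
        intro j; by_cases h : (j : ℕ) = B + 2
        · simp [h]
        · rw [if_neg (by omega), if_neg (by omega)]; ring
      rw [Finset.sum_congr rfl fun j _ => this j, sum_ite_val]
    have h4 : (∑ j : Fin n, (if (j : ℕ) = 0 ∧ B + 1 = 0 then (1:ℝ) else 0) * g (j : ℕ)) = 0 := by
      apply Finset.sum_eq_zero; intro j _; rw [if_neg (by omega)]; ring
    rw [h1, h2, h3, h4, if_pos (by omega : B < n)]
    rw [if_pos (by omega : 1 ≤ B + 1), if_neg (by omega : ¬ B + 1 = 0)]
    simp only [Nat.add_sub_cancel]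
    ring


lemma kernel1D (n : ℕ) (hn : 2 ≤ n) (a i : Fin (n + 1)) :
    (∑ o : Option (Fin n), Wn n o a * phe n o i) = if a = i then 1 else 0 := by
  have hA : (a : ℕ) ≤ n := by omega
  have hI : (i : ℕ) ≤ n := by omega
  have hn0 : (0 : ℝ) < n := by exact_mod_cast (by omega : 0 < n)
  rw [Fintype.sum_option]
  have hterm : ∀ j : Fin n, Wn n (some j) a * phe n (some j) i
      = WI (j : ℕ) (a : ℕ) * (((i : ℕ) - (j : ℕ) : ℕ) : ℝ) := by
    intro j
    show ((n : ℝ) * WI (j : ℕ) (a : ℕ)) * max ((i : ℝ) / n - (j : ℝ) / n) 0 = _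
    rcases le_or_gt (j : ℕ) (i : ℕ) with h | h
    · have hmax : max ((i : ℝ) / n - (j : ℝ) / n) 0 = (((i : ℕ) - (j : ℕ) : ℕ) : ℝ) / n := by
        rw [max_eq_left (by
          rw [sub_nonneg]
          gcongr)]
        rw [Nat.cast_sub h, sub_div]
      rw [hmax]
      field_simp
    · have hmax : max ((i : ℝ) / n - (j : ℝ) / n) 0 = 0 := by
        rw [max_eq_right]
        rw [sub_nonpos]
        gcongr
      rw [hmax, Nat.sub_eq_zero_of_le h.le]
      simp
  rw [Finset.sum_congr rfl (fun j _ => hterm j),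
    sum_WI n hn (a : ℕ) hA (fun c => (((i : ℕ) - c : ℕ) : ℝ))]
  show (if (a : ℕ) = 0 then (1:ℝ) else 0) * 1 + _ = _
  have e2 : (if (a : ℕ) < n then (((i : ℕ) - (a : ℕ) : ℕ) : ℝ) else 0)
      = (((i : ℕ) - (a : ℕ) : ℕ) : ℝ) := by
    split_ifs with h
    · rfl
    · rw [Nat.sub_eq_zero_of_le (by omega)]; norm_num
  have e3 : (if (a : ℕ) + 1 < n then (((i : ℕ) - ((a : ℕ) + 1) : ℕ) : ℝ) else 0)
      = (((i : ℕ) - ((a : ℕ) + 1) : ℕ) : ℝ) := by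
    split_ifs with h
    · rfl
    · rw [Nat.sub_eq_zero_of_le (by omega)]; norm_num
  rw [e2, e3]
  have hai : (if a = i then (1:ℝ) else 0) = if (a : ℕ) = (i : ℕ) then 1 else 0 := by
    simp [Fin.ext_iff]
  rw [hai]
  by_cases ha0 : (a : ℕ) = 0
  · rw [ha0]
    rw [if_pos rfl, if_pos rfl, if_neg (by omega : ¬ 1 ≤ 0)]
    simp only [Nat.sub_zero]
    rcases Nat.eq_zero_or_pos (i : ℕ) with h | h
    · rw [h]
      norm_num
    · rw [if_neg (by omega : ¬ (0:ℕ) = (i : ℕ)),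
        show ((i : ℕ) - (0 + 1) : ℕ) = (i : ℕ) - 1 from by omega,
        Nat.cast_sub (by omega : 1 ≤ (i : ℕ))]
      push_cast
      ring
  · rw [if_neg ha0, if_neg ha0, if_pos (by omega : 1 ≤ (a : ℕ))]
    split_ifs with h
    · rw [show ((i : ℕ) - ((a : ℕ) - 1) : ℕ) = 1 from by omega,
        show ((i : ℕ) - (a : ℕ) : ℕ) = 0 from by omega,
        show ((i : ℕ) - ((a : ℕ) + 1) : ℕ) = 0 from by omega]
      norm_num
    · have key : ((i : ℕ) - ((a : ℕ) - 1)) + ((i : ℕ) - ((a : ℕ) + 1))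
          = 2 * ((i : ℕ) - (a : ℕ)) := by omega
      have key' := congrArg (fun t : ℕ => (t : ℝ)) key
      push_cast at key'
      linarith [key']

lemma sum_Wn_top (n : ℕ) (hn : 2 ≤ n) (b : Fin (n + 1)) :
    (∑ j : Fin n, Wn n (some j) b)
      = (n : ℝ) * ((if (b : ℕ) = (n - 1) + 1 then 1 else 0)
          - if (b : ℕ) = n - 1 then 1 else 0) := by
  have hb : (b : ℕ) ≤ n := by omega
  show (∑ j : Fin n, (n : ℝ) * WI (j : ℕ) (b : ℕ)) = _
  rw [← Finset.mul_sum]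
  congr 1
  have : ∀ j : Fin n, WI (j : ℕ) (b : ℕ) = WI (j : ℕ) (b : ℕ) * (fun _ : ℕ => (1:ℝ)) (j : ℕ) :=
    fun j => (mul_one _).symm
  rw [Finset.sum_congr rfl fun j _ => this j, sum_WI n hn (b : ℕ) hb (fun _ => (1:ℝ))]
  split_ifs <;> first | (exfalso; omega) | norm_num


lemma matching {d : ℕ} (nk : Fin d → ℕ) (f : (Fin d → ℝ) → ℝ)
    (p : Fin d → ℕ) (x : (k : Fin d) → Fin (p k + 1) → ℝ)
    (e : (k : Fin d) → (i : Fin (p k + 1)) → Fin (nk k + 1))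
    (W : (k : Fin d) → Fin (nk k + 1) → ℝ) (C : Fin d → ℝ)
    (hW : ∀ k b, W k b = ∑ i : Fin (p k + 1),
        if b = e k i then C k * (∏ j ∈ Finset.univ.erase i, (x k i - x k j))⁻¹ else 0)
    (hx : ∀ k i, x k i = ((e k i : ℕ) : ℝ) / nk k) :
    (∑ a : (k : Fin d) → Fin (nk k + 1),
        (∏ k, W k (a k)) * f (fun k => ((a k : ℕ) : ℝ) / nk k))
      = (∏ k, C k) * mvDivDiff f p x := by
  classical
  set w : (k : Fin d) → Fin (p k + 1) → ℝ :=
    fun k i => C k * (∏ j ∈ Finset.univ.erase i, (x k i - x k j))⁻¹ with hw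
  have step1 : ∀ a : (k : Fin d) → Fin (nk k + 1),
      (∏ k, W k (a k)) = ∑ ii : (k : Fin d) → Fin (p k + 1),
        (if (∀ k, a k = e k (ii k)) then (1:ℝ) else 0) * ∏ k, w k (ii k) := by
    intro a
    calc (∏ k, W k (a k))
        = ∏ k, ∑ i ∈ (Finset.univ : Finset (Fin (p k + 1))),
            (if a k = e k i then w k i else 0) :=
          Finset.prod_congr rfl fun k _ => hW k (a k)
      _ = ∑ ii ∈ Fintype.piFinset (fun k => (Finset.univ : Finset (Fin (p k + 1)))),
            ∏ k, (if a k = e k (ii k) then w k (ii k) else 0) :=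
          Finset.prod_univ_sum _ _
      _ = ∑ ii : (k : Fin d) → Fin (p k + 1),
            (if (∀ k, a k = e k (ii k)) then (1:ℝ) else 0) * ∏ k, w k (ii k) := by
          rw [Fintype.piFinset_univ]
          refine Finset.sum_congr rfl fun ii _ => ?_
          have h1 : ∀ k, (if a k = e k (ii k) then w k (ii k) else 0)
              = (if a k = e k (ii k) then (1:ℝ) else 0) * w k (ii k) := by
            intro k; split_ifs <;> ring
          rw [Finset.prod_congr rfl fun k _ => h1 k, Finset.prod_mul_distrib,
            Finset.prod_boole]
          congr 1
          simp
  have LHS2 : (∑ a : (k : Fin d) → Fin (nk k + 1),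
      (∏ k, W k (a k)) * f (fun k => ((a k : ℕ) : ℝ) / nk k))
    = ∑ ii : (k : Fin d) → Fin (p k + 1),
        (∏ k, w k (ii k)) * f (fun k => ((e k (ii k) : ℕ) : ℝ) / nk k) := by
    rw [Finset.sum_congr rfl fun a _ => by rw [step1 a, Finset.sum_mul]]
    rw [Finset.sum_comm]
    refine Finset.sum_congr rfl fun ii _ => ?_
    have h2 : ∀ a : (k : Fin d) → Fin (nk k + 1),
        ((if (∀ k, a k = e k (ii k)) then (1:ℝ) else 0) * ∏ k, w k (ii k))
            * f (fun k => ((a k : ℕ) : ℝ) / nk k)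
        = if a = (fun k => e k (ii k)) then
            (∏ k, w k (ii k)) * f (fun k => ((a k : ℕ) : ℝ) / nk k) else 0 := by
      intro a
      have : (a = fun k => e k (ii k)) ↔ (∀ k, a k = e k (ii k)) := funext_iff
      rw [if_congr this.symm rfl rfl] at *
      split_ifs <;> ring
    rw [Finset.sum_congr rfl fun a _ => h2 a, Finset.sum_ite_eq' Finset.univ
      (fun k => e k (ii k)) (fun a => (∏ k, w k (ii k)) * f (fun k => ((a k : ℕ) : ℝ) / nk k)),
      if_pos (Finset.mem_univ _)]
  rw [LHS2]
  unfold mvDivDiff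
  rw [Finset.mul_sum]
  refine Finset.sum_congr rfl fun ii _ => ?_
  have harg : (fun k => ((e k (ii k) : ℕ) : ℝ) / nk k) = (fun k => x k (ii k)) := by
    funext k; exact (hx k (ii k)).symm
  rw [harg]
  have hprod : (∏ k, w k (ii k))
      = (∏ k, C k) * (∏ k, ∏ j ∈ Finset.univ.erase (ii k), (x k (ii k) - x k j))⁻¹ := by
    rw [hw, ← Finset.prod_inv_distrib, ← Finset.prod_mul_distrib]
  rw [hprod, div_eq_mul_inv]
  ring


def pcc {n : ℕ} : Option (Fin n) → ℕ
  | none => 0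
  | some j => if (j : ℕ) = 0 then 1 else 2

def bcc {n : ℕ} : Option (Fin n) → ℕ
  | none => 0
  | some j => (j : ℕ) - 1

def Ccc (n : ℕ) : Option (Fin n) → ℝ
  | none => 1
  | some j => if (j : ℕ) = 0 then 1 else 2 / n

lemma bcc_pcc_le {n : ℕ} (o : Option (Fin n)) : bcc o + pcc o ≤ n := by
  cases o with
  | none => simp [bcc, pcc]
  | some j => have := j.isLt; simp only [bcc, pcc]; split_ifs <;> omega

lemma coordW1 {n q : ℕ} (hq : q = 0) (b : Fin (n + 1)) (c : ℝ) (hc : c = 1)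
    (x' : Fin (q + 1) → ℝ) (e' : Fin (q + 1) → Fin (n + 1)) (he : (e' 0 : ℕ) = 0) :
    (if (b : ℕ) = 0 then (1:ℝ) else 0)
      = ∑ i : Fin (q + 1), if b = e' i then c * (∏ j ∈ Finset.univ.erase i, (x' i - x' j))⁻¹ else 0 := by
  subst hq
  rw [Fin.sum_univ_one]
  have h0 : (Finset.univ.erase (0 : Fin 1)) = ∅ := by decide
  rw [h0, Finset.prod_empty, inv_one, hc, mul_one]
  have hcond : (b = e' 0) ↔ ((b : ℕ) = 0) := by rw [Fin.ext_iff, he]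
  rw [if_congr hcond rfl rfl]

lemma coordW2 {n q : ℕ} (hq : q = 1) (hn : 1 ≤ n) (t0 : ℕ) (ht0 : t0 + 1 ≤ n) (b : Fin (n + 1))
    (c : ℝ) (hc : c = 1)
    (x' : Fin (q + 1) → ℝ) (hx' : ∀ i, x' i = ((t0 + (i : ℕ) : ℕ) : ℝ) / n)
    (e' : Fin (q + 1) → Fin (n + 1)) (he : ∀ i, (e' i : ℕ) = t0 + (i : ℕ)) :
    (n : ℝ) * ((if (b : ℕ) = t0 + 1 then 1 else 0) - (if (b : ℕ) = t0 then 1 else 0))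
      = ∑ i : Fin (q + 1), if b = e' i then c * (∏ j ∈ Finset.univ.erase i, (x' i - x' j))⁻¹ else 0 := by
  subst hq
  have hn0 : (0 : ℝ) < n := by exact_mod_cast (by omega : 0 < n)
  have hne : (n : ℝ) ≠ 0 := ne_of_gt hn0
  rw [Fin.sum_univ_two]
  have h0 : (Finset.univ.erase (0 : Fin 2)) = {1} := by decide
  have h1 : (Finset.univ.erase (1 : Fin 2)) = {0} := by decide
  rw [h0, h1, Finset.prod_singleton, Finset.prod_singleton]
  have d0 : x' 0 - x' 1 = -(1 / (n:ℝ)) := by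
    rw [hx' 0, hx' 1]; push_cast [Fin.val_zero, Fin.val_one, Fin.val_two]; ring
  have d1 : x' 1 - x' 0 = 1 / (n:ℝ) := by
    rw [hx' 1, hx' 0]; push_cast [Fin.val_zero, Fin.val_one, Fin.val_two]; ring
  rw [d0, d1, hc]
  have v0 : (1:ℝ) * (-(1 / (n:ℝ)))⁻¹ = -(n:ℝ) := by field_simp
  have v1 : (1:ℝ) * ((1 / (n:ℝ)))⁻¹ = (n:ℝ) := by field_simp
  rw [v0, v1]
  have c0 : (b = e' 0) ↔ ((b : ℕ) = t0) := by rw [Fin.ext_iff]; simp [he 0]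
  have c1 : (b = e' 1) ↔ ((b : ℕ) = t0 + 1) := by rw [Fin.ext_iff]; simp [he 1]
  rw [if_congr c0 rfl rfl, if_congr c1 rfl rfl]
  split_ifs <;> first | (exfalso; omega) | ring

lemma coordW3 {n q : ℕ} (hq : q = 2) (J : ℕ) (hJ1 : 1 ≤ J) (hJn : J + 1 ≤ n) (b : Fin (n + 1))
    (c : ℝ) (hc : c = 2 / n)
    (x' : Fin (q + 1) → ℝ) (hx' : ∀ i, x' i = ((J - 1 + (i : ℕ) : ℕ) : ℝ) / n)
    (e' : Fin (q + 1) → Fin (n + 1)) (he : ∀ i, (e' i : ℕ) = J - 1 + (i : ℕ)) :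
    (n : ℝ) * WI J (b : ℕ)
      = ∑ i : Fin (q + 1), if b = e' i then c * (∏ j ∈ Finset.univ.erase i, (x' i - x' j))⁻¹ else 0 := by
  subst hq
  have hn0 : (0 : ℝ) < n := by exact_mod_cast (by omega : 0 < n)
  have hne : (n : ℝ) ≠ 0 := ne_of_gt hn0
  rw [Fin.sum_univ_three]
  have h0 : (Finset.univ.erase (0 : Fin 3)) = {1, 2} := by decide
  have h1 : (Finset.univ.erase (1 : Fin 3)) = {0, 2} := by decide
  have h2 : (Finset.univ.erase (2 : Fin 3)) = {0, 1} := by decide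
  rw [h0, h1, h2, Finset.prod_pair (by decide), Finset.prod_pair (by decide),
    Finset.prod_pair (by decide)]
  have d01 : x' 0 - x' 1 = -(1 / (n:ℝ)) := by rw [hx' 0, hx' 1]; push_cast [Fin.val_zero, Fin.val_one, Fin.val_two]; ring
  have d02 : x' 0 - x' 2 = -(2 / (n:ℝ)) := by rw [hx' 0, hx' 2]; push_cast [Fin.val_zero, Fin.val_one, Fin.val_two]; ring
  have d10 : x' 1 - x' 0 = 1 / (n:ℝ) := by rw [hx' 1, hx' 0]; push_cast [Fin.val_zero, Fin.val_one, Fin.val_two]; ring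
  have d12 : x' 1 - x' 2 = -(1 / (n:ℝ)) := by rw [hx' 1, hx' 2]; push_cast [Fin.val_zero, Fin.val_one, Fin.val_two]; ring
  have d20 : x' 2 - x' 0 = 2 / (n:ℝ) := by rw [hx' 2, hx' 0]; push_cast [Fin.val_zero, Fin.val_one, Fin.val_two]; ring
  have d21 : x' 2 - x' 1 = 1 / (n:ℝ) := by rw [hx' 2, hx' 1]; push_cast [Fin.val_zero, Fin.val_one, Fin.val_two]; ring
  rw [d01, d02, d10, d12, d20, d21, hc]
  have v0 : (2 / (n:ℝ)) * (-(1 / (n:ℝ)) * -(2 / (n:ℝ)))⁻¹ = (n:ℝ) := by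
    rw [show (-(1 / (n:ℝ)) * -(2 / (n:ℝ))) = 2 / ((n:ℝ)^2) from by ring, inv_div]
    field_simp
  have v1 : (2 / (n:ℝ)) * ((1 / (n:ℝ)) * -(1 / (n:ℝ)))⁻¹ = -(2 * (n:ℝ)) := by
    rw [show ((1 / (n:ℝ)) * -(1 / (n:ℝ))) = -(1 / ((n:ℝ)^2)) from by ring, inv_neg, inv_div]
    field_simp
  have v2 : (2 / (n:ℝ)) * ((2 / (n:ℝ)) * (1 / (n:ℝ)))⁻¹ = (n:ℝ) := by
    rw [show ((2 / (n:ℝ)) * (1 / (n:ℝ))) = 2 / ((n:ℝ)^2) from by ring, inv_div]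
    field_simp
  rw [v0, v1, v2]
  have c0 : (b = e' 0) ↔ ((b : ℕ) = J - 1) := by rw [Fin.ext_iff]; simp [he 0]
  have c1 : (b = e' 1) ↔ ((b : ℕ) = J) := by
    rw [Fin.ext_iff]; rw [he 1]
    simp only [Fin.val_one]
    constructor <;> intro h <;> omega
  have c2 : (b = e' 2) ↔ ((b : ℕ) = J + 1) := by
    rw [Fin.ext_iff]; rw [he 2]
    simp only [Fin.val_two]
    constructor <;> intro h <;> omega
  rw [if_congr c0 rfl rfl, if_congr c1 rfl rfl, if_congr c2 rfl rfl]
  unfold WI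
  rw [if_neg (by omega : ¬ (J = 0 ∧ (b:ℕ) = 0))]
  have c3 : (J = (b:ℕ) + 1) ↔ ((b:ℕ) = J - 1) := by constructor <;> intro h <;> omega
  rw [if_congr c3 rfl rfl]
  split_ifs <;> first | (exfalso; omega) | ring



lemma coordW_all {n : ℕ} (hn : 2 ≤ n) (o : Option (Fin n)) (b : Fin (n + 1))
    (x' : Fin (pcc o + 1) → ℝ) (hx' : ∀ i, x' i = ((bcc o + (i : ℕ) : ℕ) : ℝ) / n)
    (e' : Fin (pcc o + 1) → Fin (n + 1)) (he : ∀ i, (e' i : ℕ) = bcc o + (i : ℕ)) :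
    Wn n o b = ∑ i : Fin (pcc o + 1),
      if b = e' i then Ccc n o * (∏ j ∈ Finset.univ.erase i, (x' i - x' j))⁻¹ else 0 := by
  cases o with
  | none =>
      exact coordW1 rfl b (Ccc n none) rfl x' e' ((he 0).trans rfl)
  | some j =>
      by_cases hj : (j : ℕ) = 0
      · have hbc : bcc (some j) = 0 := by simp [bcc, hj]
        have hW : Wn n (some j) b
            = (n : ℝ) * ((if (b : ℕ) = bcc (some j) + 1 then 1 else 0)
                - (if (b : ℕ) = bcc (some j) then 1 else 0)) := by
          show (n : ℝ) * WI (j : ℕ) (b : ℕ) = _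
          rw [hbc, hj]
          congr 1
          unfold WI
          split_ifs <;> first | (exfalso; omega) | (exfalso; assumption) | ring
        rw [hW]
        exact coordW2 (by simp [pcc, hj]) (by omega) (bcc (some j))
          (by rw [hbc]; omega) b (Ccc n (some j)) (by simp [Ccc, hj]) x' hx' e' he
      · have hJ : Wn n (some j) b = (n : ℝ) * WI (j : ℕ) (b : ℕ) := rfl
        rw [hJ]
        have hbc : bcc (some j) = (j : ℕ) - 1 := rfl
        rw [hbc] at hx' he
        exact coordW3 (by simp [pcc, hj]) (j : ℕ) (by omega) (by have := j.isLt; omega) b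
          (Ccc n (some j)) (by simp [Ccc, hj]) x' hx' e' he


lemma Wn_some_zero {n : ℕ} (j : Fin n) (hj : (j : ℕ) = 0) (b : Fin (n + 1)) :
    Wn n (some j) b = (n : ℝ) * ((if (b : ℕ) = 0 + 1 then 1 else 0)
      - (if (b : ℕ) = 0 then 1 else 0)) := by
  show (n : ℝ) * WI (j : ℕ) (b : ℕ) = _
  rw [hj]
  congr 1
  unfold WI
  split_ifs <;> first | (exfalso; omega) | (exfalso; assumption) | ring

section Main

variable {d : ℕ}

/-- the tensor-product coefficient of the (generalized) knot profile `m`. -/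
def cxd (nk : Fin d → ℕ) (f : (Fin d → ℝ) → ℝ) (m : ∀ k, Option (Fin (nk k))) : ℝ :=
  ∑ a : (k : Fin d) → Fin (nk k + 1),
    (∏ k, Wn (nk k) (m k) (a k)) * f (fun k => ((a k : ℕ) : ℝ) / nk k)

/-- interpolation: the hinge expansion with coefficients `cxd` reproduces `f` on the grid. -/
lemma interp (nk : Fin d → ℕ) (hnk : ∀ k, 2 ≤ nk k) (f : (Fin d → ℝ) → ℝ)
    (i : ∀ k, Fin (nk k + 1)) :
    (∑ m : ∀ k, Option (Fin (nk k)), cxd nk f m * ∏ k, phe (nk k) (m k) (i k))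
      = f (fun k => ((i k : ℕ) : ℝ) / nk k) := by
  classical
  unfold cxd
  have h1 : ∀ m : ∀ k, Option (Fin (nk k)),
      ((∑ a : (k : Fin d) → Fin (nk k + 1),
          (∏ k, Wn (nk k) (m k) (a k)) * f (fun k => ((a k : ℕ) : ℝ) / nk k))
        * ∏ k, phe (nk k) (m k) (i k))
      = ∑ a : (k : Fin d) → Fin (nk k + 1),
          (∏ k, Wn (nk k) (m k) (a k) * phe (nk k) (m k) (i k))
            * f (fun k => ((a k : ℕ) : ℝ) / nk k) := by
    intro m
    rw [Finset.sum_mul]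
    refine Finset.sum_congr rfl fun a _ => ?_
    rw [Finset.prod_mul_distrib]
    ring
  rw [Finset.sum_congr rfl fun m _ => h1 m, Finset.sum_comm]
  have h2 : ∀ a : (k : Fin d) → Fin (nk k + 1),
      (∑ m : ∀ k, Option (Fin (nk k)),
          (∏ k, Wn (nk k) (m k) (a k) * phe (nk k) (m k) (i k))
            * f (fun k => ((a k : ℕ) : ℝ) / nk k))
      = (if a = i then 1 else 0) * f (fun k => ((a k : ℕ) : ℝ) / nk k) := by
    intro a
    rw [← Finset.sum_mul]
    congr 1
    have swap : (∑ m : ∀ k, Option (Fin (nk k)),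
        ∏ k, Wn (nk k) (m k) (a k) * phe (nk k) (m k) (i k))
        = ∏ k, ∑ o ∈ (Finset.univ : Finset (Option (Fin (nk k)))),
            Wn (nk k) o (a k) * phe (nk k) o (i k) := by
      rw [Finset.prod_univ_sum, Fintype.piFinset_univ]
    rw [swap]
    have hker : ∀ k, (∑ o ∈ (Finset.univ : Finset (Option (Fin (nk k)))),
        Wn (nk k) o (a k) * phe (nk k) o (i k)) = if a k = i k then 1 else 0 :=
      fun k => kernel1D (nk k) (hnk k) (a k) (i k)
    rw [Finset.prod_congr rfl fun k _ => hker k, Finset.prod_boole]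
    simp [funext_iff]
  rw [Finset.sum_congr rfl fun a _ => h2 a]
  have h3 : ∀ a : (k : Fin d) → Fin (nk k + 1),
      (if a = i then (1:ℝ) else 0) * f (fun k => ((a k : ℕ) : ℝ) / nk k)
      = if a = i then f (fun k => ((a k : ℕ) : ℝ) / nk k) else 0 := by
    intro a; split_ifs <;> ring
  rw [Finset.sum_congr rfl fun a _ => h3 a,
    Finset.sum_ite_eq' Finset.univ i (fun a => f (fun k => ((a k : ℕ) : ℝ) / nk k)),
    if_pos (Finset.mem_univ _)]


lemma cx_eq_divdiff (nk : Fin d → ℕ) (hnk : ∀ k, 2 ≤ nk k) (f : (Fin d → ℝ) → ℝ)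
    (m : ∀ k, Option (Fin (nk k))) :
    cxd nk f m = (∏ k, Ccc (nk k) (m k)) *
      mvDivDiff f (fun k => pcc (m k))
        (fun k i => ((bcc (m k) + (i : ℕ) : ℕ) : ℝ) / nk k) :=
  matching nk f (fun k => pcc (m k))
    (fun k i => ((bcc (m k) + (i : ℕ) : ℕ) : ℝ) / nk k)
    (fun k i => ⟨bcc (m k) + (i : ℕ),
      by have h1 := bcc_pcc_le (m k)
         have h2 : (i : ℕ) < pcc (m k) + 1 := i.isLt
         omega⟩)
    (fun k => Wn (nk k) (m k)) (fun k => Ccc (nk k) (m k))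
    (fun k b => coordW_all (hnk k) (m k) b _ (fun i => rfl) _ (fun i => rfl))
    (fun k i => rfl)

lemma cx_nonpos (nk : Fin d → ℕ) (hnk : ∀ k, 2 ≤ nk k) (f : (Fin d → ℝ) → ℝ)
    (hf : MemTCP d f) (m : ∀ k, Option (Fin (nk k)))
    (hm : ∃ k, ∃ j : Fin (nk k), m k = some j ∧ (j : ℕ) ≠ 0) :
    cxd nk f m ≤ 0 := by
  rw [cx_eq_divdiff nk hnk f m]
  have h1 : 0 ≤ ∏ k, Ccc (nk k) (m k) := by
    apply Finset.prod_nonneg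
    intro k _
    cases hmk : m k with
    | none => simp [Ccc]
    | some j =>
        simp only [Ccc]
        split_ifs
        · norm_num
        · positivity
  have h2 : mvDivDiff f (fun k => pcc (m k))
      (fun k i => ((bcc (m k) + (i : ℕ) : ℕ) : ℝ) / nk k) ≤ 0 := by
    apply hf
    · intro k
      cases m k with
      | none => simp [pcc]
      | some j => simp only [pcc]; split_ifs <;> omega
    · obtain ⟨k, j, hkj, hj⟩ := hm
      exact ⟨k, by rw [hkj]; simp [pcc, hj]⟩
    · intro k
      intro u v huv
      have hn0 : (0:ℝ) < nk k := by exact_mod_cast (by have := hnk k; omega : 0 < nk k)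
      show ((bcc (m k) + (u : ℕ) : ℕ) : ℝ) / nk k < ((bcc (m k) + (v : ℕ) : ℕ) : ℝ) / nk k
      gcongr
      exact huv
    · intro k j
      have hn0 : (0:ℝ) < nk k := by exact_mod_cast (by have := hnk k; omega : 0 < nk k)
      constructor
      · positivity
      · rw [div_le_one hn0]
        have h1 := bcc_pcc_le (m k)
        have h2 := j.isLt
        exact_mod_cast (by omega : bcc (m k) + (j:ℕ) ≤ nk k)
  calc (∏ k, Ccc (nk k) (m k)) * mvDivDiff f (fun k => pcc (m k))
        (fun k i => ((bcc (m k) + (i : ℕ) : ℕ) : ℝ) / nk k)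
      ≤ (∏ k, Ccc (nk k) (m k)) * 0 := by
        apply mul_le_mul_of_nonneg_left h2 h1
    _ = 0 := mul_zero _

lemma cx_m0_eq (nk : Fin d → ℕ) (hnk : ∀ k, 2 ≤ nk k) (f : (Fin d → ℝ) → ℝ)
    (M : ∀ k, Option (Fin (nk k))) (S : Finset (Fin d))
    (hM : ∀ k, M k = if k ∈ S then some (⟨0, by have := hnk k; omega⟩ : Fin (nk k)) else none) :
    cxd nk f M =
      mvDivDiff f (fun k => if k ∈ S then 1 else 0) (fun k j => (j : ℝ) / nk k) := by
  classical
  have key := matching nk f (fun k => if k ∈ S then 1 else 0)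
    (fun k j => (j : ℝ) / nk k)
    (fun k j => ⟨(j : ℕ), by
      have h1 : (j : ℕ) < (if k ∈ S then 1 else 0) + 1 := j.isLt
      have h2 := hnk k
      by_cases hk : k ∈ S
      · simp only [if_pos hk] at h1; omega
      · simp only [if_neg hk] at h1; omega⟩)
    (fun k => Wn (nk k) (M k)) (fun _ => (1:ℝ))
    (fun k b => by
      beta_reduce
      by_cases hk : k ∈ S
      · simp only [hM, if_pos hk]
        rw [Wn_some_zero _ rfl]
        exact coordW2 (if_pos hk) (by have := hnk k; omega) 0 (by have := hnk k; omega) b 1 rfl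
          _ (fun i => by norm_num) _ (fun i => by norm_num)
      · simp only [hM, if_neg hk]
        exact coordW1 (if_neg hk) b 1 rfl _ _ (by norm_num))
    (fun k i => rfl)
  rw [show cxd nk f M = ∑ a : (k : Fin d) → Fin (nk k + 1),
      (∏ k, Wn (nk k) (M k) (a k)) * f (fun k => ((a k : ℕ) : ℝ) / nk k) from rfl, key]
  simp

lemma fiber_sum (nk : Fin d → ℕ) (hnk : ∀ k, 2 ≤ nk k) (f : (Fin d → ℝ) → ℝ)
    (S : Finset (Fin d)) :
    (∑ m ∈ Finset.univ.filter
        (fun m : ∀ k, Option (Fin (nk k)) => Finset.univ.filter (fun k => (m k).isSome) = S),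
      cxd nk f m)
      = mvDivDiff f (fun k => if k ∈ S then 1 else 0)
          (fun k j => if k ∈ S then ((nk k : ℝ) - 1 + (j : ℝ)) / nk k else 0) := by
  classical
  have hfib : Finset.univ.filter
      (fun m : ∀ k, Option (Fin (nk k)) => Finset.univ.filter (fun k => (m k).isSome) = S)
      = Fintype.piFinset (fun k => if k ∈ S then Finset.univ.image some else {none}) := by
    ext m
    simp only [Finset.mem_filter, Finset.mem_univ, true_and, Fintype.mem_piFinset]
    constructor
    · intro h k
      have hk : (m k).isSome ↔ k ∈ S := by
        rw [← h]; simp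
      by_cases hks : k ∈ S
      · rw [if_pos hks]
        obtain ⟨j, hj⟩ := Option.isSome_iff_exists.mp (hk.mpr hks)
        simp [hj]
      · rw [if_neg hks]
        have : ¬ (m k).isSome := fun hc => hks (hk.mp hc)
        simp only [Finset.mem_singleton]
        cases hmk : m k with
        | none => rfl
        | some j => rw [hmk] at this; simp at this
    · intro h
      ext k
      simp only [Finset.mem_filter, Finset.mem_univ, true_and]
      have := h k
      by_cases hks : k ∈ S
      · rw [if_pos hks] at this
        simp only [Finset.mem_image] at this
        obtain ⟨j, _, hj⟩ := this
        simp [← hj, hks]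
      · rw [if_neg hks] at this
        simp only [Finset.mem_singleton] at this
        simp [this, hks]
  rw [hfib]
  unfold cxd
  rw [Finset.sum_comm]
  have inner : ∀ a : (k : Fin d) → Fin (nk k + 1),
      (∑ m ∈ Fintype.piFinset (fun k => if k ∈ S then Finset.univ.image some else {none}),
        (∏ k, Wn (nk k) (m k) (a k)) * f (fun k => ((a k : ℕ) : ℝ) / nk k))
      = (∏ k, ∑ o ∈ (if k ∈ S then Finset.univ.image some else {none}), Wn (nk k) o (a k))
          * f (fun k => ((a k : ℕ) : ℝ) / nk k) := by
    intro a
    rw [← Finset.sum_mul, Finset.prod_univ_sum]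
  rw [Finset.sum_congr rfl fun a _ => inner a]
  have key := matching nk f (fun k => if k ∈ S then 1 else 0)
    (fun k j => if k ∈ S then ((nk k : ℝ) - 1 + (j : ℝ)) / nk k else 0)
    (fun k j => ⟨(if k ∈ S then nk k - 1 else 0) + (j : ℕ), by
      have h1 : (j : ℕ) < (if k ∈ S then 1 else 0) + 1 := j.isLt
      have h2 := hnk k
      by_cases hk : k ∈ S
      · simp only [if_pos hk] at h1 ⊢; omega
      · simp only [if_neg hk] at h1 ⊢; omega⟩)
    (fun k b => ∑ o ∈ (if k ∈ S then Finset.univ.image some else {none}), Wn (nk k) o b)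
    (fun _ => (1:ℝ))
    (fun k b => by
      beta_reduce
      by_cases hk : k ∈ S
      · rw [if_pos hk, Finset.sum_image (fun x _ y _ h => Option.some_injective _ h),
          sum_Wn_top (nk k) (hnk k) b]
        exact coordW2 (if_pos hk) (by have := hnk k; omega) (nk k - 1)
          (by have := hnk k; omega) b 1 rfl _
          (fun i => by
            rw [if_pos hk]
            have h2 := hnk k
            push_cast [Nat.cast_sub (by omega : 1 ≤ nk k)]
            ring)
          _
          (fun i => by simp [hk])
      · rw [if_neg hk, Finset.sum_singleton]
        exact coordW1 (if_neg hk) b 1 rfl _ _ (by simp [hk]))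
    (fun k i => by
      beta_reduce
      by_cases hk : k ∈ S
      · simp only [if_pos hk]
        have h2 := hnk k
        push_cast [Nat.cast_sub (by omega : 1 ≤ nk k)]
        ring
      · simp only [if_neg hk]
        have : (i : ℕ) = 0 := by
          have h3 : (i : ℕ) < (if k ∈ S then 1 else 0) + 1 := i.isLt
          simp only [if_neg hk] at h3; omega
        rw [this]
        norm_num)
  rw [key]
  simp

end Main

section Assemble

variable {d : ℕ} (nk : Fin d → ℕ) (hnk : ∀ k, 2 ≤ nk k) (f : (Fin d → ℝ) → ℝ)

/-- the profile: all knots at `0` on coordinates in `S`, none elsewhere. -/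
def m0S (S : Finset (Fin d)) : ∀ k, Option (Fin (nk k)) := fun k =>
  if k ∈ S then some (⟨0, by have := hnk k; omega⟩ : Fin (nk k)) else none

/-- the support of a knot profile. -/
def Smf (m : ∀ k, Option (Fin (nk k))) : Finset (Fin d) :=
  Finset.univ.filter fun k => (m k).isSome

/-- the knot location of the profile `m`. -/
def tknot (m : ∀ k, Option (Fin (nk k))) : Fin d → ℝ := fun k =>
  match m k with
  | none => 0
  | some j => (j : ℝ) / nk k

/-- profiles contributing genuine atoms of `ν_S`. -/
def atomsF (S : Finset (Fin d)) : Finset (∀ k, Option (Fin (nk k))) :=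
  Finset.univ.filter fun m => Smf nk m = S ∧ m ≠ m0S nk hnk S

lemma Smf_m0S (S : Finset (Fin d)) : Smf nk (m0S nk hnk S) = S := by
  ext k
  by_cases hk : k ∈ S <;> simp [Smf, m0S, hk]

lemma mem_fiber_some {m : ∀ k, Option (Fin (nk k))} {S : Finset (Fin d)}
    (h : Smf nk m = S) {k : Fin d} (hk : k ∈ S) : ∃ j, m k = some j := by
  have : k ∈ Smf nk m := h ▸ hk
  simp only [Smf, Finset.mem_filter, Finset.mem_univ, true_and] at this
  exact Option.isSome_iff_exists.mp this

lemma mem_fiber_none {m : ∀ k, Option (Fin (nk k))} {S : Finset (Fin d)}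
    (h : Smf nk m = S) {k : Fin d} (hk : k ∉ S) : m k = none := by
  have : k ∉ Smf nk m := h ▸ hk
  simp only [Smf, Finset.mem_filter, Finset.mem_univ, true_and] at this
  cases hmk : m k with
  | none => rfl
  | some j => rw [hmk] at this; simp at this

lemma atomsF_spec {S : Finset (Fin d)} {m : ∀ k, Option (Fin (nk k))}
    (hm : m ∈ atomsF nk hnk S) :
    ∃ k, ∃ j : Fin (nk k), m k = some j ∧ (j : ℕ) ≠ 0 := by
  simp only [atomsF, Finset.mem_filter, Finset.mem_univ, true_and] at hm
  obtain ⟨hS, hne⟩ := hm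
  by_contra hc
  push_neg at hc
  apply hne
  funext k
  by_cases hk : k ∈ S
  · obtain ⟨j, hj⟩ := mem_fiber_some nk hS hk
    have hj0 := hc k j hj
    rw [hj, m0S, if_pos hk]
    congr 1
    exact Fin.ext hj0
  · rw [mem_fiber_none nk hS hk, m0S, if_neg hk]

lemma cx_atoms_nonpos (hf : MemTCP d f) {S : Finset (Fin d)}
    {m : ∀ k, Option (Fin (nk k))} (hm : m ∈ atomsF nk hnk S) :
    cxd nk f m ≤ 0 :=
  cx_nonpos nk hnk f hf m (atomsF_spec nk hnk hm)

lemma tknot_mem_support {S : Finset (Fin d)} {m : ∀ k, Option (Fin (nk k))}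
    (hm : m ∈ atomsF nk hnk S) : tknot nk m ∈ tcSupport d S := by
  have hS : Smf nk m = S := by
    simp only [atomsF, Finset.mem_filter, Finset.mem_univ, true_and] at hm
    exact hm.1
  constructor
  · intro k hk
    obtain ⟨j, hj⟩ := mem_fiber_some nk hS hk
    have hn0 : (0:ℝ) < nk k := by exact_mod_cast (by have := hnk k; omega : 0 < nk k)
    constructor
    · show 0 ≤ tknot nk m k
      simp only [tknot, hj]
      positivity
    · show tknot nk m k < 1
      simp only [tknot, hj]
      rw [div_lt_one hn0]
      exact_mod_cast j.isLt
  · obtain ⟨k, j, hkj, hj0⟩ := atomsF_spec nk hnk hm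
    refine ⟨k, ?_, ?_⟩
    · rw [← hS]
      simp [Smf, hkj]
    · show tknot nk m k ≠ 0
      simp only [tknot, hkj]
      have hn0 : (0:ℝ) < nk k := by exact_mod_cast (by have := hnk k; omega : 0 < nk k)
      positivity


/-- the measure `ν_S` of the constructed representation. -/
def nuS (S : Finset (Fin d)) : Measure (Fin d → ℝ) :=
  ∑ m ∈ atomsF nk hnk S, ENNReal.ofReal (-(cxd nk f m)) • Measure.dirac (tknot nk m)

lemma hinge_continuous (x : Fin d → ℝ) (S : Finset (Fin d)) :
    Continuous (fun t : Fin d → ℝ => ∏ j ∈ S, max (x j - t j) 0) := by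
  apply continuous_finset_prod
  intro j _
  exact (continuous_const.sub (continuous_apply j)).max continuous_const

lemma integrable_dirac' {g : (Fin d → ℝ) → ℝ} (hg : Continuous g) (a : Fin d → ℝ) :
    Integrable g (Measure.dirac a) := by
  constructor
  · exact hg.aestronglyMeasurable
  · show HasFiniteIntegral g (Measure.dirac a)
    rw [HasFiniteIntegral, MeasureTheory.lintegral_dirac]
    exact ENNReal.coe_lt_top

lemma nuS_finite (S : Finset (Fin d)) : IsFiniteMeasure (nuS nk hnk f S) := by
  constructor
  rw [nuS, Measure.finset_sum_apply]
  apply ENNReal.sum_lt_top.mpr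
  intro m _
  rw [Measure.smul_apply, smul_eq_mul]
  exact ENNReal.mul_lt_top ENNReal.ofReal_lt_top (measure_lt_top _ _)

lemma nuS_support (S : Finset (Fin d)) : nuS nk hnk f S (tcSupport d S)ᶜ = 0 := by
  rw [nuS, Measure.finset_sum_apply]
  apply Finset.sum_eq_zero
  intro m hm
  rw [Measure.smul_apply, Measure.dirac_apply, Set.indicator_of_notMem, smul_eq_mul,
    mul_zero]
  rw [Set.notMem_compl_iff]
  exact tknot_mem_support nk hnk hm

lemma nuS_integral (hf : MemTCP d f) (S : Finset (Fin d)) (x : Fin d → ℝ) :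
    (∫ t, (∏ j ∈ S, max (x j - t j) 0) ∂(nuS nk hnk f S))
      = ∑ m ∈ atomsF nk hnk S, (-(cxd nk f m)) * ∏ j ∈ S, max (x j - tknot nk m j) 0 := by
  rw [nuS, integral_finset_sum_measure (fun m _ =>
    (integrable_dirac' (hinge_continuous x S) (tknot nk m)).smul_measure
      ENNReal.ofReal_ne_top)]
  refine Finset.sum_congr rfl fun m hm => ?_
  rw [integral_smul_measure, integral_dirac, smul_eq_mul,
    ENNReal.toReal_ofReal (by linarith [cx_atoms_nonpos nk hnk f hf hm])]

lemma nuS_total (hf : MemTCP d f) (S : Finset (Fin d)) :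
    (nuS nk hnk f S Set.univ).toReal = ∑ m ∈ atomsF nk hnk S, (-(cxd nk f m)) := by
  rw [nuS, Measure.finset_sum_apply, ENNReal.toReal_sum (fun m _ => by
    rw [Measure.smul_apply, smul_eq_mul]
    exact ENNReal.mul_ne_top ENNReal.ofReal_ne_top (measure_ne_top _ _))]
  refine Finset.sum_congr rfl fun m hm => ?_
  rw [Measure.smul_apply, Measure.dirac_apply, smul_eq_mul]
  rw [Set.indicator_of_mem (Set.mem_univ _)]
  simp only [Pi.one_apply, mul_one]
  exact ENNReal.toReal_ofReal (by linarith [cx_atoms_nonpos nk hnk f hf hm])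

/-- the constructed totally concave representation interpolating `f` on the grid. -/
def rep (hf : MemTCP d f) : TCRep d where
  β0 := cxd nk f (fun _ => none)
  β := fun S => cxd nk f (m0S nk hnk S)
  ν := nuS nk hnk f
  finite := nuS_finite nk hnk f
  support := nuS_support nk hnk f


lemma smallSets_eq : smallSets d d = Finset.univ.filter (fun S : Finset (Fin d) => S.Nonempty) := by
  unfold smallSets
  ext S
  simp only [Finset.mem_filter, Finset.mem_univ, true_and, Finset.one_le_card]
  exact ⟨fun h => h.1, fun h => ⟨h, le_trans (Finset.card_le_univ S) (by simp)⟩⟩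

lemma sum_fiber (g : (∀ k, Option (Fin (nk k))) → ℝ) (S : Finset (Fin d)) :
    (∑ m ∈ Finset.univ.filter (fun m => Smf nk m = S), g m)
      = g (m0S nk hnk S) + ∑ m ∈ atomsF nk hnk S, g m := by
  have hmem : m0S nk hnk S ∈ Finset.univ.filter (fun m => Smf nk m = S) := by
    simp [Smf_m0S]
  have hset : (Finset.univ.filter (fun m => Smf nk m = S)).erase (m0S nk hnk S)
      = atomsF nk hnk S := by
    ext m
    simp only [atomsF, Finset.mem_erase, Finset.mem_filter, Finset.mem_univ, true_and]
    tauto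
  rw [← Finset.add_sum_erase _ g hmem, hset]

lemma fiber_empty : Finset.univ.filter (fun m : ∀ k, Option (Fin (nk k)) => Smf nk m = ∅)
    = {fun _ => none} := by
  ext m
  simp only [Finset.mem_filter, Finset.mem_univ, true_and, Finset.mem_singleton]
  constructor
  · intro h
    funext k
    have : k ∉ Smf nk m := by rw [h]; simp
    simp only [Smf, Finset.mem_filter, Finset.mem_univ, true_and] at this
    exact Option.not_isSome_iff_eq_none.mp this
  · intro h
    rw [h]
    ext k
    simp [Smf]

lemma decomp (g : (∀ k, Option (Fin (nk k))) → ℝ) :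
    (∑ m : ∀ k, Option (Fin (nk k)), g m)
      = g (fun _ => none) + ∑ S ∈ smallSets d d,
          (g (m0S nk hnk S) + ∑ m ∈ atomsF nk hnk S, g m) := by
  classical
  rw [← Finset.sum_fiberwise Finset.univ (Smf nk) g]
  rw [← Finset.sum_filter_add_sum_filter_not Finset.univ
    (fun S : Finset (Fin d) => S.Nonempty)
    (fun S => ∑ m ∈ Finset.univ.filter (fun m => Smf nk m = S), g m)]
  have h2 : (Finset.univ.filter (fun S : Finset (Fin d) => ¬ S.Nonempty)) = {∅} := by
    ext S
    simp [Finset.not_nonempty_iff_eq_empty]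
  rw [h2, Finset.sum_singleton, fiber_empty, Finset.sum_singleton, smallSets_eq]
  rw [Finset.sum_congr rfl (fun S _ => sum_fiber nk hnk g S)]
  ring

lemma phe_prod (m : ∀ k, Option (Fin (nk k))) (S : Finset (Fin d)) (h : Smf nk m = S)
    (a : ∀ k, Fin (nk k + 1)) :
    (∏ k, phe (nk k) (m k) (a k))
      = ∏ j ∈ S, max (((a j : ℕ) : ℝ) / nk j - tknot nk m j) 0 := by
  rw [← Finset.prod_subset (Finset.subset_univ S) (fun k _ hk => by
    rw [mem_fiber_none nk h hk]; rfl)]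
  refine Finset.prod_congr rfl fun k hk => ?_
  obtain ⟨j, hj⟩ := mem_fiber_some nk h hk
  simp only [phe, hj, tknot]

lemma phe_prod_m0S (S : Finset (Fin d)) (a : ∀ k, Fin (nk k + 1)) :
    (∏ k, phe (nk k) (m0S nk hnk S k) (a k)) = ∏ j ∈ S, ((a j : ℕ) : ℝ) / nk j := by
  rw [phe_prod nk (m0S nk hnk S) S (Smf_m0S nk hnk S) a]
  refine Finset.prod_congr rfl fun j hj => ?_
  have h0 : tknot nk (m0S nk hnk S) j = 0 := by
    simp [tknot, m0S, if_pos hj]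
  rw [h0, sub_zero, max_eq_left (by positivity)]


lemma toFun_grid (hf : MemTCP d f) (a : ∀ k, Fin (nk k + 1)) :
    (rep nk hnk f hf).toFun d (fun k => ((a k : ℕ) : ℝ) / nk k)
      = f (fun k => ((a k : ℕ) : ℝ) / nk k) := by
  classical
  rw [← interp nk hnk f a]
  rw [decomp nk hnk (fun m => cxd nk f m * ∏ k, phe (nk k) (m k) (a k))]
  show cxd nk f (fun _ => none)
      + (∑ S ∈ smallSets d d, cxd nk f (m0S nk hnk S) * ∏ j ∈ S, ((a j : ℕ) : ℝ) / nk j)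
      - (∑ S ∈ smallSets d d,
          ∫ t, (∏ j ∈ S, max (((a j : ℕ) : ℝ) / nk j - t j) 0) ∂(nuS nk hnk f S)) = _
  rw [Finset.sum_congr rfl
    (fun S _ => nuS_integral nk hnk f hf S (fun k => ((a k : ℕ) : ℝ) / nk k))]
  have hterm : ∀ S ∈ smallSets d d,
      (cxd nk f (m0S nk hnk S) * ∏ k, phe (nk k) (m0S nk hnk S k) (a k))
        + (∑ m ∈ atomsF nk hnk S, cxd nk f m * ∏ k, phe (nk k) (m k) (a k))
      = cxd nk f (m0S nk hnk S) * (∏ j ∈ S, ((a j : ℕ) : ℝ) / nk j)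
        + (∑ m ∈ atomsF nk hnk S, cxd nk f m
            * ∏ j ∈ S, max (((a j : ℕ) : ℝ) / nk j - tknot nk m j) 0) := by
    intro S _
    rw [phe_prod_m0S nk hnk S a]
    congr 1
    refine Finset.sum_congr rfl fun m hm => ?_
    have hSm : Smf nk m = S := by
      simp only [atomsF, Finset.mem_filter, Finset.mem_univ, true_and] at hm
      exact hm.1
    rw [phe_prod nk m S hSm a]
  rw [Finset.sum_congr rfl hterm]
  have hnone : (∏ k, phe (nk k) ((fun _ => none : ∀ k, Option (Fin (nk k))) k) (a k)) = 1 :=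
    Finset.prod_eq_one (fun k _ => rfl)
  rw [hnone, mul_one]
  have hneg : ∀ S ∈ smallSets d d,
      (∑ m ∈ atomsF nk hnk S, (-(cxd nk f m))
          * ∏ j ∈ S, max (((a j : ℕ) : ℝ) / nk j - tknot nk m j) 0)
      = - ∑ m ∈ atomsF nk hnk S, cxd nk f m
          * ∏ j ∈ S, max (((a j : ℕ) : ℝ) / nk j - tknot nk m j) 0 := by
    intro S _
    rw [← Finset.sum_neg_distrib]
    exact Finset.sum_congr rfl fun m _ => neg_mul _ _
  rw [Finset.sum_congr rfl hneg, Finset.sum_neg_distrib, Finset.sum_add_distrib]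
  ring

lemma V_eq (hf : MemTCP d f) :
    (rep nk hnk f hf).V d
      = ∑ S ∈ Finset.univ.filter (fun S : Finset (Fin d) => S.Nonempty),
          (mvDivDiff f (fun k => if k ∈ S then 1 else 0) (fun k j => (j : ℝ) / nk k)
            - mvDivDiff f (fun k => if k ∈ S then 1 else 0)
                (fun k j => if k ∈ S then ((nk k : ℝ) - 1 + (j : ℝ)) / nk k else 0)) := by
  classical
  show (∑ S ∈ smallSets d d, ((nuS nk hnk f S) Set.univ).toReal) = _
  rw [smallSets_eq]
  refine Finset.sum_congr rfl fun S hS => ?_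
  rw [nuS_total nk hnk f hf S]
  have hsf := sum_fiber nk hnk (cxd nk f) S
  have h1 : (∑ m ∈ atomsF nk hnk S, (-(cxd nk f m)))
      = cxd nk f (m0S nk hnk S)
        - ∑ m ∈ Finset.univ.filter (fun m => Smf nk m = S), cxd nk f m := by
    rw [Finset.sum_neg_distrib]
    linarith [hsf]
  rw [h1, cx_m0_eq nk hnk f (m0S nk hnk S) S (fun k => rfl)]
  congr 1
  exact fiber_sum nk hnk f S

end Assemble

end VUB

/-- **Lemma (simple bound on `V_design`).**
For the equally spaced lattice design and `f ∈ F^d_TCP`,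
`V_design(f) ≤ Σ_{∅≠S⊆[d]} [D_S^0(f) − D_S^1(f)]`, where `D_S^0(f)` and `D_S^1(f)` are
the first-order divided differences of `f` of order `1_S` at the bottom and top corner
cells of the lattice. -/
theorem vdesign_upper_bound (d : ℕ) (nk : Fin d → ℕ) (hnk : ∀ k, 2 ≤ nk k)
    (f : (Fin d → ℝ) → ℝ) (hf : MemTCP d f) :
    Vdesign d (latticePoint nk) f ≤
      ∑ S ∈ Finset.univ.filter (fun S : Finset (Fin d) => S.Nonempty),
        (mvDivDiff f (fun k => if k ∈ S then 1 else 0)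
            (fun k j => (j : ℝ) / (nk k)) -
         mvDivDiff f (fun k => if k ∈ S then 1 else 0)
            (fun k j => if k ∈ S then ((nk k : ℝ) - 1 + (j : ℝ)) / (nk k) else 0)) := by
  classical
  have hmem : (VUB.rep nk hnk f hf).V d ∈
      {v : ℝ | ∃ r : TCRep d,
        (∀ i, r.toFun d (latticePoint nk i) = f (latticePoint nk i)) ∧ v = r.V d} := by
    refine ⟨VUB.rep nk hnk f hf, fun i => ?_, rfl⟩
    have h := VUB.toFun_grid nk hnk f hf (fun k => (i k).castSucc)
    have harg : latticePoint nk i = fun k => (((i k).castSucc : ℕ) : ℝ) / nk k := by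
      funext k
      simp [latticePoint]
    rw [harg]
    exact h
  have hbdd : BddBelow {v : ℝ | ∃ r : TCRep d,
      (∀ i, r.toFun d (latticePoint nk i) = f (latticePoint nk i)) ∧ v = r.V d} := by
    refine ⟨0, fun v hv => ?_⟩
    obtain ⟨r, _, rfl⟩ := hv
    exact Finset.sum_nonneg fun S _ => ENNReal.toReal_nonneg
  have hle := csInf_le hbdd hmem
  rw [VUB.V_eq nk hnk f hf] at hle
  exact hle

end
end
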